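/- arXiv:1403.1909 — 10 statements merged into one kernel-verified Lean document; each statement's English description precedes it below -/
import Mathlib

section
/- Every Haar meager subset of an abelian Polish group is meager. -/
open Set

section KuratowskiUlam

variable {Y Z : Type*} [TopologicalSpace Y] [TopologicalSpace Z]

/-- For a dense open subset of a product with second countable second factor,
the set of `y` whose section is dense is residual. -/
lemma residual_dense_sections [SecondCountableTopology Z] {W : Set (Y × Z)}
    (hWo : IsOpen W) (hWd : Dense W) :
    {y : Y | Dense {z : Z | (y, z) ∈ W}} ∈ residual Y := by
  obtain ⟨b, hbc, hbne, hb⟩ := TopologicalSpace.exists_countable_basis Z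
  have key : ⋂ V ∈ b, {y : Y | ∃ z ∈ V, (y, z) ∈ W} ⊆ {y : Y | Dense {z : Z | (y, z) ∈ W}} := by
    intro y hy
    simp only [mem_setOf_eq]
    rw [hb.dense_iff]
    intro o ho _
    have := (mem_iInter₂.mp hy) o ho
    obtain ⟨z, hzV, hzW⟩ := this
    exact ⟨z, hzV, hzW⟩
  refine Filter.mem_of_superset ?_ key
  refine (countable_bInter_mem hbc).mpr fun V hV => ?_
  have hVo : IsOpen V := hb.isOpen hV
  have hVne : V.Nonempty := by
    rcases eq_empty_or_nonempty V with rfl | h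
    · exact absurd hV hbne
    · exact h
  have heq : {y : Y | ∃ z ∈ V, (y, z) ∈ W} = Prod.fst '' (W ∩ Prod.snd ⁻¹' V) := by
    ext y
    constructor
    · rintro ⟨z, hzV, hzW⟩
      exact ⟨(y, z), ⟨hzW, hzV⟩, rfl⟩
    · rintro ⟨⟨y', z⟩, ⟨hzW, hzV⟩, rfl⟩
      exact ⟨z, hzV, hzW⟩
  rw [heq]
  refine residual_of_dense_open (isOpenMap_fst _ (hWo.inter (hVo.preimage continuous_snd))) ?_
  rw [dense_iff_inter_open]
  rintro O hOo ⟨y, hy⟩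
  have hbox : (O ×ˢ V).Nonempty := Set.Nonempty.prod ⟨y, hy⟩ hVne
  obtain ⟨p, hpbox, hpW⟩ := hWd.inter_open_nonempty (O ×ˢ V) (hOo.prod hVo) hbox
  exact ⟨p.1, hpbox.1, p, ⟨hpW, hpbox.2⟩, rfl⟩

/-- Half of the Kuratowski–Ulam theorem: if a subset of a product (with second countable
second factor) is meager, then residually many sections are meager. -/
lemma residual_isMeagre_sections [SecondCountableTopology Z] {E : Set (Y × Z)}
    (hE : IsMeagre E) : {y : Y | IsMeagre {z : Z | (y, z) ∈ E}} ∈ residual Y := by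
  rw [IsMeagre, mem_residual_iff] at hE
  obtain ⟨S, hSo, hSd, hSc, hSsub⟩ := hE
  have key : (⋂ W ∈ S, {y : Y | Dense {z : Z | (y, z) ∈ W}}) ⊆
      {y : Y | IsMeagre {z : Z | (y, z) ∈ E}} := by
    intro y hy
    have hsub : (⋂ W ∈ S, {z : Z | (y, z) ∈ W}) ⊆ {z : Z | (y, z) ∈ E}ᶜ := by
      intro z hz
      have : (y, z) ∈ ⋂₀ S := by
        rw [mem_sInter]
        intro W hW
        exact (mem_iInter₂.mp hz) W hW
      exact hSsub this
    show {z : Z | (y, z) ∈ E}ᶜ ∈ residual Z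
    refine Filter.mem_of_superset ?_ hsub
    refine (countable_bInter_mem hSc).mpr fun W hW => ?_
    refine residual_of_dense_open ?_ ((mem_iInter₂.mp hy) W hW)
    exact (hSo W hW).preimage (Continuous.prodMk_right y)
  refine Filter.mem_of_superset ?_ key
  exact (countable_bInter_mem hSc).mpr fun W hW =>
    residual_dense_sections (hSo W hW) (hSd W hW)

/-- In a Baire space, a nonempty open set is not meager. -/
lemma not_isMeagre_of_isOpen' [BaireSpace Y] {U : Set Y} (hU : IsOpen U)
    (hne : U.Nonempty) (h : IsMeagre U) : False := by
  have hd : Dense Uᶜ := dense_of_mem_residual h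
  obtain ⟨y, hyU, hyUc⟩ := hd.inter_open_nonempty U hU hne
  exact hyUc hyU

/-- The other half of Kuratowski–Ulam: a Baire measurable set all of whose sections
(in the second, second-countable Baire, factor) are meager is itself meager. -/
lemma isMeagre_of_sections_isMeagre [BaireSpace Y] [BaireSpace Z] [SecondCountableTopology Z]
    {E : Set (Y × Z)} (hBM : BaireMeasurableSet E)
    (hsec : ∀ y : Y, IsMeagre {z : Z | (y, z) ∈ E}) : IsMeagre E := by
  by_contra hnm
  obtain ⟨U', hU'o, hEU'⟩ := hBM.residualEq_isOpen
  have hsymm : {p : Y × Z | p ∈ E ↔ p ∈ U'} ∈ residual (Y × Z) := by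
    have := hEU'
    rw [Filter.eventuallyEq_set] at this
    exact this
  -- U' is nonempty, else E would be meager
  have hU'ne : U'.Nonempty := by
    rcases eq_empty_or_nonempty U' with rfl | h
    · refine absurd (show IsMeagre E from Filter.mem_of_superset hsymm fun p hp => ?_) hnm
      simp only [mem_setOf_eq, mem_empty_iff_false, iff_false] at hp
      exact hp
    · exact h
  obtain ⟨⟨y₀, z₀⟩, hp₀⟩ := hU'ne
  obtain ⟨U, V, hUo, hVo, hyU, hzV, hbox⟩ := isOpen_prod_iff.mp hU'o y₀ z₀ hp₀
  -- the part of the box outside E is meager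
  have hdiff : IsMeagre ((U ×ˢ V) \ E) := by
    refine Filter.mem_of_superset hsymm ?_
    intro p hp hpd
    exact hpd.2 (hp.mpr (hbox hpd.1))
  -- residually many sections of the meager set `(U ×ˢ V) \ E` are meager
  have hres := residual_isMeagre_sections hdiff
  have hd : Dense {y : Y | IsMeagre {z : Z | (y, z) ∈ (U ×ˢ V) \ E}} :=
    dense_of_mem_residual hres
  obtain ⟨y, hyU', hym⟩ := hd.inter_open_nonempty U hUo ⟨y₀, hyU⟩
  -- hence V is meager, contradicting Baireness of Z
  have hVm : IsMeagre V := by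
    have hEy := hsec y
    have hsub : V ⊆ {z : Z | (y, z) ∈ (U ×ˢ V) \ E} ∪ {z : Z | (y, z) ∈ E} := by
      intro z hz
      by_cases hzE : (y, z) ∈ E
      · exact Or.inr hzE
      · exact Or.inl ⟨⟨hyU', hz⟩, hzE⟩
    refine IsMeagre.mono hsub ?_
    rw [IsMeagre, compl_union]
    exact Filter.inter_mem hym hEy
  exact not_isMeagre_of_isOpen' hVo ⟨z₀, hzV⟩ hVm

end KuratowskiUlam

/-- `A` is *Haar meager* in an abelian (Polish) group `X` if there are a Borel set
`B ⊇ A`, a (nonempty) compact metric space `K` and a continuous `f : K → X` such that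
`f ⁻¹ (B + x)` is meager in `K` for every `x ∈ X`.  Here `B + x = {y | y - x ∈ B}`. -/
def IsHaarMeager {X : Type*} [AddCommGroup X] [TopologicalSpace X]
    [MeasurableSpace X] (A : Set X) : Prop :=
  ∃ B : Set X, A ⊆ B ∧ MeasurableSet B ∧
    ∃ (K : Type) (_ : MetricSpace K) (_ : CompactSpace K) (_ : Nonempty K)
      (f : K → X), Continuous f ∧ ∀ x : X, IsMeagre (f ⁻¹' {y | y - x ∈ B})

/-- Every Haar meager subset of an abelian Polish group is meager. -/
theorem isMeagre_of_isHaarMeager {X : Type*} [AddCommGroup X] [TopologicalSpace X]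
    [IsTopologicalAddGroup X] [PolishSpace X] [MeasurableSpace X] [BorelSpace X]
    (A : Set X) (hA : IsHaarMeager A) : IsMeagre A := by
  obtain ⟨B, hAB, hB, K, _, _, _, f, hf, hsec⟩ := hA
  letI := TopologicalSpace.upgradeIsCompletelyMetrizable X
  borelize K
  -- the "Christensen set" in the product
  set E : Set (X × K) := (fun p : X × K => f p.2 - p.1) ⁻¹' B with hEdef
  have hcont : Continuous fun p : X × K => f p.2 - p.1 :=
    (hf.comp continuous_snd).sub continuous_fst
  have hBM : BaireMeasurableSet E := (hB.preimage hcont.measurable).baireMeasurableSet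
  have hE : IsMeagre E := by
    refine isMeagre_of_sections_isMeagre hBM fun x => ?_
    have : {z : K | (x, z) ∈ E} = f ⁻¹' {y | y - x ∈ B} := rfl
    rw [this]
    exact hsec x
  -- swap the coordinates
  have hE' : IsMeagre (Prod.swap ⁻¹' E : Set (K × X)) :=
    IsMeagre.preimage_of_isOpenMap continuous_swap
      (Homeomorph.prodComm K X).isOpenMap hE
  have hres := residual_isMeagre_sections hE'
  obtain ⟨k, hk⟩ := (dense_of_mem_residual hres).nonempty
  have hk' : IsMeagre {x : X | f k - x ∈ B} := hk
  -- pull back along the homeomorphism `x ↦ f k - x` to conclude `B` is meager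
  have hBm : IsMeagre B := by
    have hpre : (fun x : X => f k - x) ⁻¹' {x : X | f k - x ∈ B} = B := by
      ext x
      simp [sub_sub_cancel]
    rw [← hpre]
    exact IsMeagre.preimage_of_isOpenMap (continuous_const.sub continuous_id)
      (Homeomorph.subLeft (f k)).isOpenMap hk'
  exact hBm.mono hAB
end

section
/- If X is a locally compact abelian Polish group and A ⊆ X is meager and Borel, then A is Haar meager. -/
open Set

/-- Preimage of a nowhere dense set in the closure of an open set is nowhere dense. -/
lemma isNowhereDense_preimage_val {X : Type*} [TopologicalSpace X] {U : Set X}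
    (hU : IsOpen U) {N : Set X} (hN : IsNowhereDense N) :
    IsNowhereDense ((Subtype.val : closure U → X) ⁻¹' N) := by
  obtain ⟨t, hsub, htnd, htcl⟩ := hN.subset_of_closed_isNowhereDense
  have hkey : IsNowhereDense ((Subtype.val : closure U → X) ⁻¹' t) := by
    have hcl : IsClosed ((Subtype.val : closure U → X) ⁻¹' t) :=
      htcl.preimage continuous_subtype_val
    rw [hcl.isNowhereDense_iff]
    rw [eq_empty_iff_forall_notMem]
    intro k hk
    obtain ⟨W, hWsub, hWopen, hkW⟩ := mem_interior.mp hk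
    rw [isOpen_induced_iff] at hWopen
    obtain ⟨V, hVopen, rfl⟩ := hWopen
    -- k.val ∈ V and k.val ∈ closure U, so V ∩ U ≠ ∅
    have hkV : (k : X) ∈ V := hkW
    have hmeet : (V ∩ U).Nonempty := by
      have := k.2
      rw [mem_closure_iff] at this
      exact this V hVopen hkV
    obtain ⟨z, hzV, hzU⟩ := hmeet
    have hzt : V ∩ U ⊆ t := by
      intro w ⟨hwV, hwU⟩
      exact hWsub (show (⟨w, subset_closure hwU⟩ : closure U) ∈ Subtype.val ⁻¹' V from hwV)
    have : z ∈ interior t := mem_interior.mpr ⟨V ∩ U, hzt, hVopen.inter hU, ⟨hzV, hzU⟩⟩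
    rw [htcl.isNowhereDense_iff] at htnd
    rw [htnd] at this
    exact this
  have : IsNowhereDense (closure ((Subtype.val : closure U → X) ⁻¹' t)) := hkey.closure
  have hmono : (Subtype.val : closure U → X) ⁻¹' N ⊆
      closure ((Subtype.val : closure U → X) ⁻¹' t) :=
    (preimage_mono hsub).trans subset_closure
  rw [IsNowhereDense] at this ⊢
  rw [eq_empty_iff_forall_notMem] at this ⊢
  intro x hx
  exact this x (interior_mono (closure_mono hmono) hx)

/-- Preimage of a meager set in the closure of an open set is meager. -/
lemma isMeagre_preimage_val {X : Type*} [TopologicalSpace X] {U : Set X}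
    (hU : IsOpen U) {S : Set X} (hS : IsMeagre S) :
    IsMeagre ((Subtype.val : closure U → X) ⁻¹' S) := by
  rw [isMeagre_iff_countable_union_isNowhereDense] at hS ⊢
  obtain ⟨𝒮, hnd, hct, hsub⟩ := hS
  refine ⟨(fun t => (Subtype.val : closure U → X) ⁻¹' t) '' 𝒮, ?_, hct.image _, ?_⟩
  · rintro _ ⟨t, ht, rfl⟩
    exact isNowhereDense_preimage_val hU (hnd t ht)
  · intro k hk
    obtain ⟨t, ht, hkt⟩ := hsub hk
    exact ⟨Subtype.val ⁻¹' t, ⟨t, ht, rfl⟩, hkt⟩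

/-- In a locally compact abelian Polish group, every meager Borel set is Haar meager. -/
theorem isHaarMeager_of_isMeagre {X : Type*} [AddCommGroup X] [TopologicalSpace X]
    [IsTopologicalAddGroup X] [PolishSpace X] [LocallyCompactSpace X]
    [MeasurableSpace X] [BorelSpace X]
    (A : Set X) (hmeager : IsMeagre A) (hBorel : MeasurableSet A) :
    IsHaarMeager A := by
  letI := TopologicalSpace.upgradeIsCompletelyMetrizable X
  -- a compact set which is the closure of a nonempty open set
  obtain ⟨C, hCcomp, hCnhds⟩ := exists_compact_mem_nhds (0 : X)
  set U : Set X := interior C with hUdef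
  have hUopen : IsOpen U := isOpen_interior
  have h0U : (0 : X) ∈ U := mem_interior_iff_mem_nhds.mpr hCnhds
  have hKsub : closure U ⊆ C := by
    calc closure U ⊆ closure C := closure_mono interior_subset
    _ = C := hCcomp.isClosed.closure_eq
  have hKcomp : IsCompact (closure U) := hCcomp.of_isClosed_subset isClosed_closure hKsub
  haveI : CompactSpace (closure U) := isCompact_iff_compactSpace.mp hKcomp
  haveI : Nonempty (closure U) := ⟨⟨0, subset_closure h0U⟩⟩
  -- the subtype is small: inject into `ℕ → ℝ`
  haveI : Nonempty X := ⟨0⟩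
  haveI : Small.{0} (closure U : Set X) := by
    apply small_of_injective (f := fun (k : closure U) (n : ℕ) =>
      dist (k : X) (TopologicalSpace.denseSeq X n))
    intro a b hab
    have hd : ∀ n, dist (a : X) (TopologicalSpace.denseSeq X n)
        = dist (b : X) (TopologicalSpace.denseSeq X n) := fun n => congrFun hab n
    have : (a : X) = (b : X) := by
      apply eq_of_forall_dist_le
      intro ε hε
      apply le_of_lt
      obtain ⟨n, hn⟩ := (TopologicalSpace.denseRange_denseSeq X).exists_dist_lt (a : X)
        (half_pos hε)
      calc dist (a : X) (b : X)
          ≤ dist (a : X) (TopologicalSpace.denseSeq X n)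
            + dist (TopologicalSpace.denseSeq X n) (b : X) := dist_triangle _ _ _
        _ = dist (a : X) (TopologicalSpace.denseSeq X n)
            + dist (b : X) (TopologicalSpace.denseSeq X n) := by rw [dist_comm (TopologicalSpace.denseSeq X n)]
        _ < ε / 2 + ε / 2 := by rw [← hd n]; linarith
        _ = ε := by ring
    exact Subtype.ext this
  -- shrink to Type 0
  set K : Type := Shrink (closure U : Set X) with hKdef
  let e : K ≃ (closure U : Set X) := (equivShrink _).symm
  letI : MetricSpace K := MetricSpace.induced e e.injective inferInstance
  have hiso : Isometry e := fun _ _ => rfl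
  let h : K ≃ₜ (closure U : Set X) := (IsometryEquiv.mk e hiso).toHomeomorph
  haveI : CompactSpace K := h.symm.compactSpace
  haveI : Nonempty K := ⟨h.symm (Classical.arbitrary _)⟩
  refine ⟨A, subset_rfl, hBorel, K, inferInstance, inferInstance, inferInstance,
    fun k => ((h k : (closure U : Set X)) : X), continuous_subtype_val.comp h.continuous, ?_⟩
  intro x
  -- the translate of A is meager in X
  have htrans : IsMeagre ({y : X | y - x ∈ A}) := by
    have : {y : X | y - x ∈ A} = (Homeomorph.subRight x) ⁻¹' A := rfl
    rw [this]
    exact hmeager.preimage_of_isOpenMap (Homeomorph.subRight x).continuous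
      (Homeomorph.subRight x).isOpenMap
  have hsub : IsMeagre ((Subtype.val : closure U → X) ⁻¹' {y : X | y - x ∈ A}) :=
    isMeagre_preimage_val hUopen htrans
  have : (fun k : K => ((h k : (closure U : Set X)) : X)) ⁻¹' {y : X | y - x ∈ A}
      = h ⁻¹' ((Subtype.val : closure U → X) ⁻¹' {y : X | y - x ∈ A}) := rfl
  rw [this]
  exact hsub.preimage_of_isOpenMap h.continuous h.isOpenMap
end

section
/- In a locally compact abelian Polish group, a Borel set is Haar meager if and only if it is meager. -/
open Set

open Topology Filter TopologicalSpace

lemma IsMeagre.union' {α : Type*} [TopologicalSpace α] {s t : Set α}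
    (hs : IsMeagre s) (ht : IsMeagre t) : IsMeagre (s ∪ t) := by
  rw [IsMeagre, compl_union]; exact Filter.inter_mem hs ht

section KU

variable {α β : Type*} [TopologicalSpace α] [TopologicalSpace β]

/-- If `W` is open and dense in `α × β` with `β` second countable, then for residually many `x`
the slice `{y | (x, y) ∈ W}` is dense. -/
lemma dense_slices_residual [SecondCountableTopology β] {W : Set (α × β)}
    (hWo : IsOpen W) (hWd : Dense W) : {x | Dense {y | (x, y) ∈ W}} ∈ residual α := by
  obtain ⟨b, bc, bne, bb⟩ := exists_countable_basis β
  have hU : ∀ v ∈ b, IsOpen {x : α | ∃ y ∈ v, (x, y) ∈ W} := by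
    intro v _
    have : {x : α | ∃ y ∈ v, (x, y) ∈ W} = ⋃ y ∈ v, {x : α | (x, y) ∈ W} := by
      ext x; simp [mem_iUnion]
    rw [this]
    exact isOpen_biUnion fun y _ => hWo.preimage (Continuous.prodMk_left y)
  have hUd : ∀ v ∈ b, Dense {x : α | ∃ y ∈ v, (x, y) ∈ W} := by
    intro v hv
    rw [dense_iff_inter_open]
    intro G hG hGne
    have hvne : v.Nonempty := nonempty_iff_ne_empty.2 fun h => bne (h ▸ hv)
    obtain ⟨⟨x, y⟩, hGv, hW⟩ := hWd.inter_open_nonempty (G ×ˢ v)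
      (hG.prod (bb.isOpen hv)) (hGne.prod hvne)
    exact ⟨x, hGv.1, ⟨y, hGv.2, hW⟩⟩
  refine mem_of_superset ((countable_bInter_mem bc).mpr
    (fun v hv => residual_of_dense_open (hU v hv) (hUd v hv))) ?_
  intro x hx
  rw [mem_iInter₂] at hx
  refine bb.dense_iff.2 fun o ho hone => ?_
  obtain ⟨y, hyv, hyW⟩ := hx o ho
  exact ⟨y, hyv, hyW⟩

/-- If `E` is meager in `α × β` with `β` second countable, then for residually many `x`
the slice `{y | (x, y) ∈ E}` is meager. -/
lemma meagre_slices_residual [SecondCountableTopology β] {E : Set (α × β)}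
    (hE : IsMeagre E) : {x | IsMeagre {y | (x, y) ∈ E}} ∈ residual α := by
  obtain ⟨S, hSnwd, hSc, hSsub⟩ := isMeagre_iff_countable_union_isNowhereDense.1 hE
  have key : ∀ t ∈ S, {x : α | Dense {y : β | (x, y) ∈ (closure t)ᶜ}} ∈ residual α := by
    intro t ht
    have h := isClosed_isNowhereDense_iff_compl.1 ⟨isClosed_closure, (hSnwd t ht).closure⟩
    exact dense_slices_residual h.1 h.2
  refine mem_of_superset ((countable_bInter_mem hSc).mpr key) ?_
  intro x hx
  rw [mem_iInter₂] at hx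
  refine isMeagre_iff_countable_union_isNowhereDense.2
    ⟨(fun t => {y : β | (x, y) ∈ closure t}) '' S, ?_, hSc.image _, ?_⟩
  · rintro _ ⟨t, ht, rfl⟩
    have hcl : IsClosed {y : β | (x, y) ∈ closure t} :=
      isClosed_closure.preimage (Continuous.prodMk_right x)
    rw [hcl.isNowhereDense_iff, interior_eq_empty_iff_dense_compl]
    exact hx t ht
  · intro y hy
    obtain ⟨t, ht, hyt⟩ := hSsub hy
    exact ⟨_, ⟨t, ht, rfl⟩, subset_closure hyt⟩

/-- Kuratowski–Ulam, hard direction: a Baire measurable set all of whose slices (over a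
second countable Baire space) are meager is meager. -/
lemma isMeagre_of_meagre_slices [SecondCountableTopology β] [BaireSpace β] {E : Set (α × β)}
    (hE : BaireMeasurableSet E) (h : ∀ x, IsMeagre {y | (x, y) ∈ E}) : IsMeagre E := by
  obtain ⟨u, huo, hu⟩ := hE.residualEq_isOpen
  set M : Set (α × β) := {p | (p ∈ E) = (p ∈ u)}ᶜ with hM
  have hMmeagre : IsMeagre M := by
    rw [IsMeagre, hM, compl_compl]; exact hu
  have hEuM : E ⊆ u ∪ M := by
    intro p hp
    by_cases hpu : p ∈ u
    · exact Or.inl hpu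
    · exact Or.inr (by simp [hM, hp, hpu])
  have huEM : u ⊆ E ∪ M := by
    intro p hp
    by_cases hpE : p ∈ E
    · exact Or.inl hpE
    · exact Or.inr (by simp [hM, hp, hpE])
  have hD₁ := meagre_slices_residual hMmeagre
  -- On the residual set, slices of u are empty.
  have hslice : ∀ x ∈ {x | IsMeagre {y : β | (x, y) ∈ M}}, {y : β | (x, y) ∈ u} = ∅ := by
    intro x hx
    by_contra hne
    have huxo : IsOpen {y : β | (x, y) ∈ u} := huo.preimage (Continuous.prodMk_right x)
    have huxm : IsMeagre {y : β | (x, y) ∈ u} :=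
      IsMeagre.mono (fun y hy => huEM hy) ((h x).union' hx)
    obtain ⟨y, hy1, hy2⟩ := (dense_of_mem_residual huxm).inter_open_nonempty _ huxo
      (nonempty_iff_ne_empty.2 hne)
    exact hy2 hy1
  have husub : u ⊆ Prod.fst ⁻¹' {x | IsMeagre {y : β | (x, y) ∈ M}}ᶜ := by
    rintro ⟨x, y⟩ hp hx
    have := hslice x hx
    rw [eq_empty_iff_forall_notMem] at this
    exact this y hp
  have hD₁c : IsMeagre ({x | IsMeagre {y : β | (x, y) ∈ M}}ᶜ) := by
    rw [IsMeagre, compl_compl]; exact hD₁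
  have hum : IsMeagre u :=
    (hD₁c.preimage_of_isOpenMap continuous_fst isOpenMap_fst).mono husub
  exact (hum.union' hMmeagre).mono hEuM

end KU

/-- A meager set in `α` meets the closure of an open set in a relatively meager set. -/
lemma isMeagre_preimage_val_closure {α : Type*} [TopologicalSpace α] {O : Set α}
    (hO : IsOpen O) {s : Set α} (hs : IsMeagre s) :
    IsMeagre ((fun k : ↥(closure O) => (k : α)) ⁻¹' s) := by
  obtain ⟨S, hSnwd, hSc, hSsub⟩ := isMeagre_iff_countable_union_isNowhereDense.1 hs
  refine isMeagre_iff_countable_union_isNowhereDense.2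
    ⟨(fun t => (fun k : ↥(closure O) => (k : α)) ⁻¹' closure t) '' S, ?_, hSc.image _, ?_⟩
  · rintro _ ⟨t, ht, rfl⟩
    have hcl : IsClosed ((fun k : ↥(closure O) => (k : α)) ⁻¹' closure t) :=
      isClosed_closure.preimage continuous_subtype_val
    rw [hcl.isNowhereDense_iff, eq_empty_iff_forall_notMem]
    intro p hp
    obtain ⟨G, hGo, hGeq⟩ := isOpen_induced_iff.1 (isOpen_interior
      (s := (fun k : ↥(closure O) => (k : α)) ⁻¹' closure t))
    rw [← hGeq] at hp
    obtain ⟨w, hwG, hwO⟩ := mem_closure_iff.1 p.2 G hGo hp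
    have hnsub : ¬ (G ∩ O ⊆ closure t) := fun hsub => by
      have h2 : G ∩ O ⊆ interior (closure t) := interior_maximal hsub (hGo.inter hO)
      rw [hSnwd t ht] at h2
      exact h2 ⟨hwG, hwO⟩
    obtain ⟨z, hzGO, hzt⟩ := not_subset.1 hnsub
    have hzK : z ∈ closure O := subset_closure hzGO.2
    have hmem : (⟨z, hzK⟩ : ↥(closure O)) ∈ Subtype.val ⁻¹' G := hzGO.1
    rw [hGeq] at hmem
    have hz2 : (⟨z, hzK⟩ : ↥(closure O)) ∈ (fun k : ↥(closure O) => (k : α)) ⁻¹' closure t :=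
      interior_subset hmem
    exact hzt hz2
  · intro k hk
    obtain ⟨t, ht, hkt⟩ := hSsub hk
    exact ⟨_, ⟨t, ht, rfl⟩, subset_closure hkt⟩

/-- In a locally compact abelian Polish group, a Borel set is Haar meager iff it is meager. -/
theorem isHaarMeager_iff_isMeagre {X : Type*} [AddCommGroup X] [TopologicalSpace X]
    [IsTopologicalAddGroup X] [PolishSpace X] [LocallyCompactSpace X]
    [MeasurableSpace X] [BorelSpace X]
    (A : Set X) (hBorel : MeasurableSet A) :
    IsHaarMeager A ↔ IsMeagre A := by
  constructor
  · -- Haar meager → meager (Kuratowski–Ulam argument; no local compactness needed).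
    rintro ⟨B, hAB, hBm, K, _, _, _, f, hf, hmeag⟩
    set E : Set (X × K) := (fun p : X × K => f p.2 - p.1) ⁻¹' B with hE
    have hEbm : BaireMeasurableSet E := by
      borelize (X × K)
      exact (((hf.comp continuous_snd).sub continuous_fst).measurable hBm).baireMeasurableSet
    have hEmeagre : IsMeagre E :=
      isMeagre_of_meagre_slices hEbm (fun x => hmeag x)
    have hswapOpen : IsOpenMap (Prod.swap : K × X → X × K) :=
      (Homeomorph.prodComm K X).isOpenMap
    have hswap : IsMeagre (Prod.swap ⁻¹' E : Set (K × X)) :=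
      hEmeagre.preimage_of_isOpenMap continuous_swap hswapOpen
    have hres := meagre_slices_residual hswap
    obtain ⟨k, hk⟩ := (dense_of_mem_residual hres).nonempty
    have hBk : IsMeagre {x : X | f k - x ∈ B} := hk
    have hBeq : B = (fun x => f k - x) ⁻¹' {x : X | f k - x ∈ B} := by
      ext x; simp [sub_sub_cancel]
    have hOM : IsOpenMap (fun x : X => f k - x) := (Homeomorph.subLeft (f k)).isOpenMap
    have hcont : Continuous (fun x : X => f k - x) := continuous_const.sub continuous_id
    have hBmeagre : IsMeagre B := by
      rw [hBeq]
      exact hBk.preimage_of_isOpenMap hcont hOM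
    exact hBmeagre.mono hAB
  · -- meager → Haar meager
    intro hm
    obtain ⟨S, hSnwd, hSc, hSsub⟩ := isMeagre_iff_countable_union_isNowhereDense.1 hm
    set B : Set X := ⋃₀ (closure '' S) with hB
    have hBmeas : MeasurableSet B :=
      MeasurableSet.sUnion (hSc.image _)
        (by rintro _ ⟨t, _, rfl⟩; exact isClosed_closure.measurableSet)
    have hABsub : A ⊆ B := fun a ha => by
      obtain ⟨t, ht, hat⟩ := hSsub ha
      exact ⟨closure t, ⟨t, ht, rfl⟩, subset_closure hat⟩
    have hBmeagre : IsMeagre B :=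
      isMeagre_iff_countable_union_isNowhereDense.2
        ⟨closure '' S, by rintro _ ⟨t, ht, rfl⟩; exact (hSnwd t ht).closure,
          hSc.image _, le_refl _⟩
    letI := upgradeIsCompletelyMetrizable X
    obtain ⟨C, hC, hCmem⟩ := exists_compact_mem_nhds (0 : X)
    have h0 : (0 : X) ∈ closure (interior C) :=
      subset_closure (mem_interior_iff_mem_nhds.mpr hCmem)
    have hKs : IsCompact (closure (interior C)) :=
      hC.of_isClosed_subset isClosed_closure (closure_minimal interior_subset hC.isClosed)
    haveI : CompactSpace ↥(closure (interior C)) := isCompact_iff_compactSpace.mp hKs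
    have hiso := kuratowskiEmbedding.isometry ↥(closure (interior C))
    haveI : CompactSpace ↥(Set.range (kuratowskiEmbedding ↥(closure (interior C)))) :=
      isCompact_iff_compactSpace.mp (isCompact_range hiso.continuous)
    have e : ↥(closure (interior C)) ≃ᵢ
        ↥(Set.range (kuratowskiEmbedding ↥(closure (interior C)))) :=
      hiso.isometryEquivOnRange
    refine ⟨B, hABsub, hBmeas, ↥(Set.range (kuratowskiEmbedding ↥(closure (interior C)))),
      inferInstance, inferInstance, ⟨e ⟨0, h0⟩⟩,
      fun k => ((e.symm k : ↥(closure (interior C))) : X),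
      continuous_subtype_val.comp e.symm.continuous, fun x => ?_⟩
    have htrans : IsMeagre {y : X | y - x ∈ B} :=
      hBmeagre.preimage_of_isOpenMap (Homeomorph.subRight x).continuous
        (Homeomorph.subRight x).isOpenMap
    have h1 : IsMeagre ((fun k : ↥(closure (interior C)) => (k : X)) ⁻¹' {y | y - x ∈ B}) :=
      isMeagre_preimage_val_closure isOpen_interior htrans
    have h2 : IsMeagre (e.symm ⁻¹'
        ((fun k : ↥(closure (interior C)) => (k : X)) ⁻¹' {y | y - x ∈ B})) :=
      h1.preimage_of_isOpenMap e.symm.continuous e.symm.toHomeomorph.isOpenMap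
    exact h2
end

section
/- Let X be an abelian Polish group and A ⊆ X a Haar meager set. For every ε > 0 there exists a witness function for A whose range is contained in the open ball of radius ε centered at the identity. -/
open Set

lemma dense_pre_closure {K : Type*} [TopologicalSpace K] {V U : Set K}
    (hV : IsOpen V) (_hU : IsOpen U) (hUd : Dense U) :
    Dense ((Subtype.val : closure V → K) ⁻¹' U) := by
  rw [dense_iff_inter_open]
  rintro W hW ⟨⟨c, hcC⟩, hcW⟩
  obtain ⟨O, hO, rfl⟩ := isOpen_induced_iff.mp hW
  have hOV : (O ∩ V).Nonempty := by
    have := mem_closure_iff.mp hcC O hO hcW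
    exact this
  obtain ⟨z, ⟨hzO, hzV⟩, hzU⟩ := hUd.inter_open_nonempty (O ∩ V) (hO.inter hV) hOV
  exact ⟨⟨z, subset_closure hzV⟩, hzO, hzU⟩

lemma meagre_restrict {K : Type*} [TopologicalSpace K] {V M : Set K}
    (hV : IsOpen V) (hM : IsMeagre M) :
    IsMeagre ((Subtype.val : closure V → K) ⁻¹' M) := by
  rw [IsMeagre, mem_residual_iff] at hM ⊢
  obtain ⟨S, hSo, hSd, hSc, hSs⟩ := hM
  refine ⟨(fun t => (Subtype.val : closure V → K) ⁻¹' t) '' S, ?_, ?_, hSc.image _, ?_⟩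
  · rintro t ⟨u, hu, rfl⟩
    exact (hSo u hu).preimage continuous_subtype_val
  · rintro t ⟨u, hu, rfl⟩
    exact dense_pre_closure hV (hSo u hu) (hSd u hu)
  · rw [sInter_image, ← preimage_compl]
    intro x hx
    apply hSs
    intro t ht
    exact mem_iInter₂.mp hx t ht

/-- Small-range witness: if `A` is Haar meager in an abelian Polish group `X` (with a
fixed compatible complete metric), then for every `ε > 0` there is a witness function
whose range lies in the open ball of radius `ε` about `0`. -/
theorem exists_witness_range_small {X : Type*} [MetricSpace X] [AddCommGroup X]
    [IsTopologicalAddGroup X] [CompleteSpace X] [SecondCountableTopology X]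
    [MeasurableSpace X] [BorelSpace X] (A : Set X)
    (hA : ∃ B : Set X, A ⊆ B ∧ MeasurableSet B ∧
      ∃ (K : Type) (_ : MetricSpace K) (_ : CompactSpace K) (_ : Nonempty K)
        (f : K → X), Continuous f ∧ ∀ x : X, IsMeagre (f ⁻¹' {y | y - x ∈ B}))
    (ε : ℝ) (hε : 0 < ε) :
    ∃ B : Set X, A ⊆ B ∧ MeasurableSet B ∧
      ∃ (K : Type) (_ : MetricSpace K) (_ : CompactSpace K) (_ : Nonempty K)
        (f : K → X), Continuous f ∧ (∀ x : X, IsMeagre (f ⁻¹' {y | y - x ∈ B})) ∧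
          Set.range f ⊆ Metric.ball (0 : X) ε := by
  obtain ⟨B, hAB, hBm, K, _, _, _, f, hfc, hm⟩ := hA
  set k0 : K := Classical.arbitrary K with hk0
  have hg : Continuous (fun k : K => f k - f k0) := hfc.sub continuous_const
  set W : Set K := (fun k : K => f k - f k0) ⁻¹' (Metric.ball 0 (ε/2)) with hWdef
  have hWo : IsOpen W := Metric.isOpen_ball.preimage hg
  have hk0W : k0 ∈ W := by
    simp only [hWdef, mem_preimage, sub_self, Metric.mem_ball, dist_self]
    positivity
  obtain ⟨δ, hδ, hδW⟩ := Metric.isOpen_iff.mp hWo k0 hk0W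
  set V : Set K := Metric.ball k0 δ with hVdef
  set C : Set K := closure V with hCdef
  refine ⟨B, hAB, hBm, C, inferInstance, ?_, ⟨⟨k0, subset_closure (Metric.mem_ball_self hδ)⟩⟩,
    fun c => f c.val - f k0, (hfc.comp continuous_subtype_val).sub continuous_const, ?_, ?_⟩
  · exact isCompact_iff_compactSpace.mp isClosed_closure.isCompact
  · intro x
    have h := meagre_restrict (Metric.isOpen_ball (x := k0) (ε := δ)) (hm (x + f k0))
    refine h.mono ?_
    intro c hc
    simp only [mem_preimage, mem_setOf_eq] at hc ⊢
    have : f c.val - f k0 - x = f c.val - (x + f k0) := by abel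
    rwa [this] at hc
  · rintro y ⟨c, rfl⟩
    have hmem : f c.val - f k0 ∈ closure ((fun k : K => f k - f k0) '' V) := by
      apply image_closure_subset_closure_image hg
      exact mem_image_of_mem _ c.2
    have h1 : (fun k : K => f k - f k0) '' V ⊆ Metric.ball 0 (ε/2) :=
      image_subset_iff.mpr (fun k hk => hδW hk)
    have h2 : f c.val - f k0 ∈ closure (Metric.ball (0:X) (ε/2)) :=
      closure_mono h1 hmem
    have h3 := Metric.closure_ball_subset_closedBall h2
    exact Metric.closedBall_subset_ball (half_lt_self hε) h3
end

section
/- Let K be a Cantor space and M any nonempty compact metric space. Then there is a continuous surjection f : K → M such that for every meager set A ⊆ M, the preimage f⁻¹(A) is meager in K. -/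
open Set

section Aux

open Metric Topology Filter Function

set_option linter.unusedSectionVars false

noncomputable section

variable {M : Type*} [MetricSpace M] [CompactSpace M] [Nonempty M]

lemma exists_decoder (u : ℕ → M) (hu : DenseRange u) {ε : ℝ} (hε : 0 < ε) :
    ∃ d : (ℕ → Bool) → ℕ, Continuous d ∧ ∀ m : M, ∃ y, dist m (u (d y)) < ε := by
  -- finite net
  have hcov : (univ : Set M) ⊆ ⋃ k, ball (u k) ε := by
    intro m _
    obtain ⟨k, hk⟩ := hu.exists_dist_lt m hε
    exact mem_iUnion.mpr ⟨k, by simpa [mem_ball, dist_comm] using hk⟩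
  obtain ⟨t, ht⟩ := isCompact_univ.elim_finite_subcover (fun k => ball (u k) ε)
    (fun k => isOpen_ball) hcov
  set N := t.sup id with hN
  have hnet : ∀ m : M, ∃ k ≤ N, dist m (u k) < ε := by
    intro m
    have := ht (mem_univ m)
    simp only [mem_iUnion, exists_prop] at this
    obtain ⟨k, hkt, hk⟩ := this
    exact ⟨k, Finset.le_sup (f := id) hkt, by simpa [mem_ball, dist_comm] using hk⟩
  -- injection Fin (N+1) → (Fin (N+1) → Bool)
  set ι : Fin (N+1) → (Fin (N+1) → Bool) := fun k i => decide (i = k) with hι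
  have hinj : Function.Injective ι := by
    intro a b hab
    have := congrFun hab a
    simp [hι, eq_comm] at this
    exact this
  set g : (Fin (N+1) → Bool) → Fin (N+1) := Function.invFun ι with hg
  have hgι : ∀ k, g (ι k) = k := fun k => Function.leftInverse_invFun hinj k
  refine ⟨fun y => (g (fun i => y i)).val, ?_, ?_⟩
  · have : Continuous fun y : ℕ → Bool => (fun i : Fin (N+1) => y i) :=
      continuous_pi fun i => continuous_apply (i : ℕ)
    exact (continuous_of_discreteTopology (f := fun v : Fin (N+1) → Bool => (g v).val)).comp this
  · intro m
    obtain ⟨k, hkN, hk⟩ := hnet m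
    refine ⟨fun j => if h : j < N+1 then ι ⟨k, Nat.lt_succ_of_le hkN⟩ ⟨j, h⟩ else false, ?_⟩
    have : (fun i : Fin (N+1) => (fun j => if h : j < N+1 then ι ⟨k, Nat.lt_succ_of_le hkN⟩ ⟨j, h⟩ else false) (i : ℕ)) = ι ⟨k, Nat.lt_succ_of_le hkN⟩ := by
      funext i
      simp [i.isLt]
    simp only []
    rw [show (fun i : Fin (N+1) => (fun j => if h : j < N+1 then ι ⟨k, Nat.lt_succ_of_le hkN⟩ ⟨j, h⟩ else false) (i : ℕ)) = ι ⟨k, Nat.lt_succ_of_le hkN⟩ from this, hgι]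
    exact hk


/-- Index recursion. -/
noncomputable def idxv (u : ℕ → M) (d : ℕ → (ℕ → Bool) → ℕ) :
    ℕ → (ℕ → ℕ → Bool) → ℕ
  | 0, x => d 0 (x 0)
  | n+1, x =>
      if dist (u (idxv u d n x)) (u (d (n+1) (x (n+1)))) ≤ 3 * (1/2 : ℝ)^n
      then d (n+1) (x (n+1)) else idxv u d n x

variable (u : ℕ → M) (d : ℕ → (ℕ → Bool) → ℕ)

lemma idxv_continuous (hd : ∀ n, Continuous (d n)) (n : ℕ) :
    Continuous fun x : ℕ → ℕ → Bool => idxv u d n x := by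
  induction n with
  | zero => exact (hd 0).comp (continuous_apply 0)
  | succ n ih =>
      have h1 : Continuous fun x : ℕ → ℕ → Bool =>
          ((idxv u d n x, d (n+1) (x (n+1))) : ℕ × ℕ) :=
        ih.prodMk ((hd (n+1)).comp (continuous_apply (n+1)))
      have h2 : Continuous fun p : ℕ × ℕ =>
          if dist (u p.1) (u p.2) ≤ 3 * (1/2 : ℝ)^n then p.2 else p.1 :=
        continuous_of_discreteTopology
      exact h2.comp h1

lemma idxv_dist_step (n : ℕ) (x : ℕ → ℕ → Bool) :
    dist (u (idxv u d n x)) (u (idxv u d (n+1) x)) ≤ 3 * (1/2 : ℝ)^n := by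
  show dist _ (u (if _ then _ else _)) ≤ _
  split
  · assumption
  · rw [dist_self]; positivity

lemma idxv_local (n : ℕ) {x z : ℕ → ℕ → Bool} (h : ∀ j ≤ n, z j = x j) :
    idxv u d n z = idxv u d n x := by
  induction n with
  | zero => show d 0 (z 0) = d 0 (x 0); rw [h 0 le_rfl]
  | succ n ih =>
      have hz : z (n+1) = x (n+1) := h (n+1) le_rfl
      have ih' := ih fun j hj => h j (hj.trans (Nat.le_succ n))
      show (if _ then _ else _) = (if _ then _ else _)
      rw [hz, ih']

lemma idxv_steering
    (hd2 : ∀ n (m : M), ∃ y, dist m (u (d n y)) < (1/2:ℝ)^n)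
    (f : (ℕ → ℕ → Bool) → M)
    (hf : ∀ x, Tendsto (fun n => u (idxv u d n x)) atTop (𝓝 (f x)))
    (x : ℕ → ℕ → Bool) (n : ℕ) (m : M)
    (hm : dist m (u (idxv u d n x)) < (1/2:ℝ)^n) :
    ∃ z, (∀ j ≤ n, z j = x j) ∧ f z = m := by
  classical
  set z : ℕ → ℕ → Bool := fun j => if j ≤ n then x j else (hd2 j m).choose with hz
  have hzx : ∀ j ≤ n, z j = x j := fun j hj => by simp [hz, hj]
  have hzc : ∀ j, n < j → z j = (hd2 j m).choose := fun j hj => by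
    simp [hz, Nat.not_le.mpr hj]
  have key : ∀ k, dist m (u (idxv u d (n+k) z)) < (1/2:ℝ)^(n+k) := by
    intro k
    induction k with
    | zero => simpa [idxv_local u d n hzx] using hm
    | succ k ih =>
        have hlt : n < n + k + 1 := by omega
        have hcand := (hd2 (n+k+1) m).choose_spec
        have hzz : z (n+k+1) = (hd2 (n+k+1) m).choose := hzc _ hlt
        have hcond : dist (u (idxv u d (n+k) z)) (u (d (n+k+1) (z (n+k+1))))
            ≤ 3 * (1/2:ℝ)^(n+k) := by
          rw [hzz]
          calc dist (u (idxv u d (n+k) z)) (u (d (n+k+1) (hd2 (n+k+1) m).choose))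
              ≤ dist (u (idxv u d (n+k) z)) m
                + dist m (u (d (n+k+1) (hd2 (n+k+1) m).choose)) := dist_triangle _ _ _
            _ ≤ (1/2:ℝ)^(n+k) + (1/2:ℝ)^(n+k+1) := by
                rw [dist_comm]
                exact add_le_add ih.le hcand.le
            _ ≤ 3 * (1/2:ℝ)^(n+k) := by rw [pow_succ]; nlinarith [pow_pos (by norm_num : (0:ℝ) < 1/2) (n+k)]
        have : idxv u d (n+k+1) z = d (n+k+1) (z (n+k+1)) := by
          show (if _ then _ else _) = _
          rw [if_pos hcond]
        rw [show n + (k+1) = n + k + 1 from rfl, this, hzz]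
        exact hcand
  have hlim : Tendsto (fun j => u (idxv u d j z)) atTop (𝓝 m) := by
    rw [Metric.tendsto_atTop]
    intro ε hε
    have hpow : Tendsto (fun j : ℕ => (1/2:ℝ)^j) atTop (𝓝 0) :=
      tendsto_pow_atTop_nhds_zero_of_lt_one (by norm_num) (by norm_num)
    obtain ⟨J₀, hJ₀⟩ := (Metric.tendsto_atTop.mp hpow) ε hε
    refine ⟨max n J₀, fun j hj => ?_⟩
    have hjn : n ≤ j := le_trans (le_max_left _ _) hj
    have : dist m (u (idxv u d j z)) < (1/2:ℝ)^j := by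
      have := key (j - n)
      rwa [Nat.add_sub_cancel' hjn] at this
    have h2 : (1/2:ℝ)^j < ε := by
      have := hJ₀ j (le_trans (le_max_right _ _) hj)
      rwa [Real.dist_eq, sub_zero, abs_of_pos (by positivity)] at this
    rw [dist_comm] at this
    exact this.trans h2
  exact ⟨z, hzx, tendsto_nhds_unique (hf z) hlim⟩



lemma exists_f0 :
    ∃ f : (ℕ → ℕ → Bool) → M, Continuous f ∧ Surjective f ∧
      ∀ U : Set M, IsOpen U → Dense U → Dense (f ⁻¹' U) := by
  classical
  obtain ⟨u, hu⟩ := TopologicalSpace.exists_dense_seq M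
  choose d hd1 hd2 using fun n : ℕ => exists_decoder u hu
    (pow_pos (by norm_num : (0:ℝ) < 1/2) n)
  set v : ℕ → (ℕ → ℕ → Bool) → M := fun n x => u (idxv u d n x) with hv
  have hstep : ∀ x n, dist (v n x) (v (n+1) x) ≤ 3 * (1/2:ℝ)^n :=
    fun x n => idxv_dist_step u d n x
  have hcauchy : ∀ x, CauchySeq (fun n => v n x) := fun x =>
    cauchySeq_of_le_geometric (1/2) 3 (by norm_num) (hstep x)
  choose f hf using fun x => cauchySeq_tendsto_of_complete (hcauchy x)
  have htail : ∀ x n, dist (v n x) (f x) ≤ 6 * (1/2:ℝ)^n := by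
    intro x n
    have := dist_le_of_le_geometric_of_tendsto (1/2) 3 (by norm_num) (hstep x) (hf x) n
    calc dist (v n x) (f x) ≤ 3 * (1/2:ℝ)^n / (1 - 1/2) := this
      _ = 6 * (1/2:ℝ)^n := by ring
  have hvcont : ∀ n, Continuous (v n) := fun n =>
    (continuous_of_discreteTopology (f := u)).comp (idxv_continuous u d hd1 n)
  have hfcont : Continuous f := by
    have huni : TendstoUniformly (fun n x => v n x) f atTop := by
      rw [Metric.tendstoUniformly_iff]
      intro ε hε
      have hpow : Tendsto (fun n : ℕ => 6 * (1/2:ℝ)^n) atTop (𝓝 0) := by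
        simpa using (tendsto_pow_atTop_nhds_zero_of_lt_one
          (by norm_num : (0:ℝ) ≤ 1/2) (by norm_num)).const_mul (6:ℝ)
      obtain ⟨J, hJ⟩ := (Metric.tendsto_atTop.mp hpow) ε hε
      filter_upwards [eventually_ge_atTop J] with n hn
      intro x
      have h1 := htail x n
      have h2 := hJ n hn
      rw [Real.dist_eq, sub_zero, abs_of_pos (by positivity)] at h2
      rw [dist_comm]
      exact lt_of_le_of_lt h1 h2
    exact huni.continuous (Eventually.of_forall hvcont).frequently
  have hsteer := idxv_steering u d hd2 f hf
  refine ⟨f, hfcont, ?_, ?_⟩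
  · intro m
    obtain ⟨y, hy⟩ := hd2 0 m
    obtain ⟨z, _, hz⟩ := hsteer (fun _ => y) 0 m (by simpa [idxv] using hy)
    exact ⟨z, hz⟩
  · intro U hUo hUd
    rw [dense_iff_inter_open]
    rintro V hV ⟨x, hx⟩
    obtain ⟨I, w, hw, hsub⟩ := isOpen_pi_iff.mp hV x hx
    set n := I.sup id with hn
    obtain ⟨m, hmU, hmb⟩ := hUd.exists_mem_open isOpen_ball
      ⟨v n x, mem_ball_self (show (0:ℝ) < (1/2)^n by positivity)⟩
    rw [mem_ball] at hmb
    obtain ⟨z, hzx, hz⟩ := hsteer x n m hmb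
    refine ⟨z, hsub fun a ha => ?_, ?_⟩
    · rw [hzx a (Finset.le_sup (f := id) ha)]
      exact (hw a ha).2
    · show z ∈ f ⁻¹' U
      rw [mem_preimage, hz]
      exact hmU


lemma meagre_preimage {X Y : Type*} [TopologicalSpace X] [TopologicalSpace Y]
    {f : X → Y} (hf : Continuous f)
    (hd : ∀ U : Set Y, IsOpen U → Dense U → Dense (f ⁻¹' U))
    (A : Set Y) (hA : IsMeagre A) : IsMeagre (f ⁻¹' A) := by
  rw [isMeagre_iff_countable_union_isNowhereDense] at hA ⊢
  obtain ⟨S, hS, hSc, hsub⟩ := hA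
  refine ⟨(fun t => f ⁻¹' (closure t)) '' S, ?_, hSc.image _, ?_⟩
  · rintro _ ⟨t, ht, rfl⟩
    have h1 : IsClosed (f ⁻¹' closure t) := isClosed_closure.preimage hf
    rw [h1.isNowhereDense_iff, interior_eq_empty_iff_dense_compl, ← preimage_compl]
    exact hd _ isClosed_closure.isOpen_compl
      (interior_eq_empty_iff_dense_compl.mp (hS t ht : interior (closure t) = ∅))
  · intro a ha
    obtain ⟨t, htS, hat⟩ := hsub ha
    exact ⟨f ⁻¹' closure t, ⟨t, htS, rfl⟩, subset_closure hat⟩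

/-- Currying homeomorphism. -/
def curryHomeo : ((ℕ × ℕ) → Bool) ≃ₜ (ℕ → ℕ → Bool) where
  toFun x i j := x (i, j)
  invFun y p := y p.1 p.2
  left_inv x := rfl
  right_inv y := rfl
  continuous_toFun := continuous_pi fun i => continuous_pi fun j => continuous_apply (i, j)
  continuous_invFun := continuous_pi fun p => (continuous_apply p.2).comp (continuous_apply p.1)

end

end Aux

/-- For every Cantor space `K` (a space homeomorphic to `{0,1}^ℕ`) and every nonempty
compact metric space `M` there is a continuous surjection `f : K → M` such that
preimages of meager sets are meager. -/
theorem exists_continuous_surjection_meager_preimage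
    {K : Type*} [TopologicalSpace K] (hK : Nonempty (K ≃ₜ (ℕ → Bool)))
    {M : Type*} [MetricSpace M] [CompactSpace M] [Nonempty M] :
    ∃ f : K → M, Continuous f ∧ Function.Surjective f ∧
      ∀ A : Set M, IsMeagre A → IsMeagre (f ⁻¹' A) := by
  obtain ⟨f₀, hf₀c, hf₀s, hf₀d⟩ := exists_f0 (M := M)
  have h1 : (ℕ → Bool) ≃ₜ ((ℕ × ℕ) → Bool) :=
    Homeomorph.piCongrLeft (Y := fun _ : ℕ × ℕ => Bool) (Denumerable.eqv (ℕ × ℕ)).symm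
  let φ : K ≃ₜ (ℕ → ℕ → Bool) := hK.some.trans (h1.trans curryHomeo)
  refine ⟨f₀ ∘ φ, hf₀c.comp φ.continuous, hf₀s.comp φ.surjective, ?_⟩
  refine fun A hA => meagre_preimage (hf₀c.comp φ.continuous) ?_ A hA
  intro U hUo hUd
  have : (f₀ ∘ φ) ⁻¹' U = φ ⁻¹' (f₀ ⁻¹' U) := rfl
  rw [this]
  exact (hf₀d U hUo hUd).preimage φ.isOpenMap
end

section
/- Let K be a Cantor space, M a compact metric space, and f : K → M a continuous surjection such that the image of every nonempty open subset of K has nonempty interior in M. Then for every meager A ⊆ M, the set f⁻¹(A) is meager in K. -/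
open Set

/-- If `K` is a Cantor space, `M` a compact metric space and `f : K → M` a continuous
surjection mapping nonempty open sets to sets with nonempty interior, then preimages
under `f` of meager sets are meager. -/
theorem meager_preimage_of_open_image
    {K : Type*} [TopologicalSpace K] (hK : Nonempty (K ≃ₜ (ℕ → Bool)))
    {M : Type*} [MetricSpace M] [CompactSpace M]
    (f : K → M) (hf : Continuous f) (hsurj : Function.Surjective f)
    (hopen : ∀ U : Set K, IsOpen U → U.Nonempty → (interior (f '' U)).Nonempty)
    (A : Set M) (hA : IsMeagre A) : IsMeagre (f ⁻¹' A) := by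
  rw [isMeagre_iff_countable_union_isNowhereDense] at hA ⊢
  obtain ⟨S, hS_nwd, hS_count, hS_sub⟩ := hA
  refine ⟨(fun t => f ⁻¹' closure t) '' S, ?_, hS_count.image _, ?_⟩
  · rintro _ ⟨t, ht, rfl⟩
    have ht' : IsNowhereDense (closure t) := (hS_nwd t ht).closure
    have hcl : IsClosed (f ⁻¹' closure t) := isClosed_closure.preimage hf
    rw [hcl.isNowhereDense_iff]
    by_contra h
    obtain ⟨x, hx⟩ := nonempty_iff_ne_empty.mpr h
    obtain ⟨y, hy⟩ := hopen _ isOpen_interior ⟨x, hx⟩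
    have : y ∈ interior (closure t) := by
      refine interior_mono ?_ hy
      exact (image_mono (f := f) interior_subset).trans (image_preimage_subset f _)
    rw [IsNowhereDense, closure_closure] at ht'
    rw [ht'] at this
    exact this
  · intro x hx
    obtain ⟨t, ht, hxt⟩ := hS_sub hx
    exact ⟨f ⁻¹' closure t, ⟨t, ht, rfl⟩, subset_closure hxt⟩
end

section
/- Let X be an abelian Polish group and A ⊆ X. Then A is Haar meager if and only if there exist a compact set K ⊆ X and a continuous function g : K → X and a Borel set B ⊇ A such that g⁻¹(B + x) is meager in K for all x ∈ X. -/
open Set Function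

namespace HaarMeagerAux


noncomputable def binVal (s : ℕ → Bool) : ℝ :=
  ∑' n, if s n then (2:ℝ)⁻¹ ^ (n+1) else 0

lemma summable_w : Summable (fun n : ℕ => (2:ℝ)⁻¹ ^ (n+1)) := by
  have := (summable_geometric_of_lt_one (by norm_num) (by norm_num : (2:ℝ)⁻¹ < 1)).mul_left
    ((2:ℝ)⁻¹)
  exact this.congr (fun n => by rw [pow_succ]; ring)

lemma summable_binterm (s : ℕ → Bool) :
    Summable (fun n => if s n then (2:ℝ)⁻¹ ^ (n+1) else 0) := by
  refine summable_w.of_nonneg_of_le (fun n => ?_) (fun n => ?_)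
  · split
    · positivity
    · exact le_refl 0
  · split
    · exact le_refl _
    · positivity

lemma continuous_binVal : Continuous binVal := by
  apply continuous_tsum (u := fun n => (2:ℝ)⁻¹ ^ (n+1))
  · intro n
    exact (continuous_of_discreteTopology
      (f := fun b : Bool => if b then (2:ℝ)⁻¹ ^ (n+1) else 0)).comp (continuous_apply n)
  · exact summable_w
  · intro n x
    split
    · rw [Real.norm_eq_abs, abs_of_nonneg (by positivity)]
    · rw [norm_zero]; positivity

lemma binVal_surjOn {r : ℝ} (h0 : 0 ≤ r) (h1 : r ≤ 1) : ∃ s, binVal s = r := by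
  classical
  set w : ℕ → ℝ := fun n => (2:ℝ)⁻¹ ^ (n+1) with hw
  let t : ℕ → ℝ := fun n => Nat.rec 0 (fun n tn => if tn + w n ≤ r then tn + w n else tn) n
  set s : ℕ → Bool := fun n => decide (t n + w n ≤ r) with hs
  have ht_succ : ∀ n, t (n+1) = t n + (if s n then w n else 0) := by
    intro n
    simp only [t, hs, decide_eq_true_eq]
    split <;> simp_all
  have hinv : ∀ n, t n ≤ r ∧ r ≤ t n + (2:ℝ)⁻¹ ^ n := by
    intro n
    induction n with
    | zero =>
      refine ⟨h0, ?_⟩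
      show r ≤ 0 + (2:ℝ)⁻¹ ^ 0
      simpa using h1
    | succ n ih =>
      have hpow : (2:ℝ)⁻¹ ^ n = (2:ℝ)⁻¹ ^ (n+1) + (2:ℝ)⁻¹ ^ (n+1) := by ring
      rw [ht_succ n]
      by_cases h : t n + w n ≤ r
      · have hsn : s n = true := by simp [hs, h]
        rw [hsn]
        simp only [if_true]
        exact ⟨h, by simp only [hw] at *; linarith [ih.2]⟩
      · have hsn : s n = false := by simp [hs, h]
        rw [hsn]
        simp only [Bool.false_eq_true, if_false, add_zero]
        push_neg at h
        exact ⟨ih.1, by simp only [hw] at *; linarith⟩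
  have hpartial : ∀ n, (Finset.range n).sum (fun i => if s i then w i else 0) = t n := by
    intro n
    induction n with
    | zero => simp [t]
    | succ n ih => rw [Finset.sum_range_succ, ih, ht_succ n]
  refine ⟨s, ?_⟩
  have hsum := (summable_binterm s).hasSum.tendsto_sum_nat
  have htr : Filter.Tendsto t Filter.atTop (nhds r) := by
    have h0' : Filter.Tendsto (fun n => t n - r) Filter.atTop (nhds 0) := by
      apply squeeze_zero_norm (fun n => ?_)
        (tendsto_pow_atTop_nhds_zero_of_lt_one (by norm_num) (by norm_num : (2:ℝ)⁻¹ < 1))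
      rw [Real.norm_eq_abs, abs_le]
      constructor
      · linarith [(hinv n).2]
      · linarith [(hinv n).1, pow_nonneg (by norm_num : (0:ℝ) ≤ 2⁻¹) n]
    have := h0'.add_const r
    simpa using this
  have hlim : Filter.Tendsto (fun n => (Finset.range n).sum (fun i => if s i then w i else 0))
      Filter.atTop (nhds r) := by
    simpa only [hpartial] using htr
  exact tendsto_nhds_unique hsum hlim



/-- The canonical continuous map from Cantor space onto a cube `[0,M]^ℕ`. -/
noncomputable def cantorToPi (M : ℝ) (s : ℕ → Bool) : ℕ → ℝ :=
  fun n => M * binVal (fun m => s (Nat.pair n m))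

lemma continuous_cantorToPi (M : ℝ) : Continuous (cantorToPi M) := by
  refine continuous_pi (fun n => Continuous.mul continuous_const ?_)
  exact continuous_binVal.comp (continuous_pi (fun m => continuous_apply _))

lemma cantorToPi_surj {M : ℝ} (hM : 0 < M) {y : ℕ → ℝ} (hy : ∀ n, y n ∈ Icc 0 M) :
    ∃ s, cantorToPi M s = y := by
  have : ∀ n, ∃ σ : ℕ → Bool, binVal σ = y n / M := by
    intro n
    refine binVal_surjOn (div_nonneg (hy n).1 hM.le) ?_
    rw [div_le_one hM]
    exact (hy n).2
  choose σ hσ using this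
  refine ⟨fun j => σ (Nat.unpair j).1 (Nat.unpair j).2, ?_⟩
  funext n
  have : (fun m => σ (Nat.unpair (Nat.pair n m)).1 (Nat.unpair (Nat.pair n m)).2) = σ n := by
    funext m; rw [Nat.unpair_pair]
  rw [cantorToPi, this, hσ n, mul_div_cancel₀ _ (ne_of_gt hM)]

lemma nwd_mono {X : Type*} [TopologicalSpace X] {s t : Set X} (ht : IsNowhereDense t)
    (hst : s ⊆ t) : IsNowhereDense s := by
  rw [IsNowhereDense] at ht ⊢
  have h := interior_mono (closure_mono hst)
  rw [ht] at h
  exact eq_empty_of_subset_empty h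

/-- Preimages of nowhere dense sets under an "irreducible" continuous surjection
from a compact space are nowhere dense. -/
lemma isNowhereDense_preimage {α β : Type*} [TopologicalSpace α] [TopologicalSpace β]
    [CompactSpace α] [T2Space β] {q : α → β} (hq : Continuous q) (hsurj : Surjective q)
    (hmin : ∀ s : Set α, IsClosed s → q '' s = univ → s = univ)
    {N : Set β} (hN : IsNowhereDense N) : IsNowhereDense (q ⁻¹' N) := by
  have hcl : IsClosed (q ⁻¹' closure N) := (isClosed_closure).preimage hq
  have hint : interior (q ⁻¹' closure N) = ∅ := by
    by_contra h
    obtain ⟨a, ha⟩ := nonempty_iff_ne_empty.2 h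
    set U := interior (q ⁻¹' closure N) with hU
    have hs : IsClosed Uᶜ := isClosed_compl_iff.mpr isOpen_interior
    have hne : q '' Uᶜ ≠ univ := by
      intro heq
      have := hmin Uᶜ hs heq
      rw [compl_univ_iff] at this
      exact absurd (this ▸ ha) (notMem_empty a)
    obtain ⟨b, hb⟩ := nonempty_compl.mpr hne |>.imp (fun b hb => hb)
    have himgcl : IsClosed (q '' Uᶜ) := (hs.isCompact.image hq).isClosed
    set W := (q '' Uᶜ)ᶜ with hW
    have hWopen : IsOpen W := himgcl.isOpen_compl
    have hWsub : W ⊆ closure N := by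
      intro w hw
      obtain ⟨a', rfl⟩ := hsurj w
      have ha' : a' ∈ U := by
        by_contra h'
        exact hw (mem_image_of_mem q h')
      have h2 : a' ∈ q ⁻¹' closure N := interior_subset ha'
      exact h2
    have : W ⊆ interior (closure N) := hWopen.subset_interior_iff.mpr hWsub
    rw [hN] at this
    exact absurd (this hb) (notMem_empty b)
  have : IsNowhereDense (q ⁻¹' closure N) := hcl.isNowhereDense_iff.mpr hint
  exact nwd_mono this (preimage_mono subset_closure)

lemma isMeagre_preimage {α β : Type*} [TopologicalSpace α] [TopologicalSpace β]
    [CompactSpace α] [T2Space β] {q : α → β} (hq : Continuous q) (hsurj : Surjective q)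
    (hmin : ∀ s : Set α, IsClosed s → q '' s = univ → s = univ)
    {M : Set β} (hM : IsMeagre M) : IsMeagre (q ⁻¹' M) := by
  rw [isMeagre_iff_countable_union_isNowhereDense] at hM ⊢
  obtain ⟨S, hS, hSc, hMS⟩ := hM
  refine ⟨(fun t => q ⁻¹' t) '' S, ?_, hSc.image _, ?_⟩
  · rintro _ ⟨t, ht, rfl⟩
    exact isNowhereDense_preimage hq hsurj hmin (hS t ht)
  · rw [sUnion_image]
    intro a ha
    obtain ⟨t, ht, hat⟩ := hMS ha
    exact mem_biUnion ht hat

/-- Zorn's lemma: a minimal closed subset mapping onto a compact target. -/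
lemma exists_minimal_closed {α β : Type*} [TopologicalSpace α] [TopologicalSpace β]
    [CompactSpace α] [T1Space β] {q : α → β} (hq : Continuous q) {T : Set β} (hTc : IsClosed T)
    (hT : T ⊆ range q) :
    ∃ L : Set α, IsClosed L ∧ L ⊆ q ⁻¹' T ∧ T ⊆ q '' L ∧
      ∀ s ⊆ L, IsClosed s → T ⊆ q '' s → s = L := by
  set S : Set (Set α) := {L | IsClosed L ∧ L ⊆ q ⁻¹' T ∧ T ⊆ q '' L} with hS
  have hx : q ⁻¹' T ∈ S := by
    refine ⟨hTc.preimage hq, Subset.rfl, ?_⟩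
    intro b hb
    obtain ⟨a, rfl⟩ := hT hb
    exact ⟨a, hb, rfl⟩
  have H : ∀ c ⊆ S, IsChain (· ⊆ ·) c → c.Nonempty → ∃ lb ∈ S, ∀ s ∈ c, lb ⊆ s := by
    intro c hcS hchain hcne
    refine ⟨⋂₀ c, ⟨isClosed_sInter (fun L hL => (hcS hL).1), ?_, ?_⟩, fun s hs => sInter_subset_of_mem hs⟩
    · obtain ⟨L, hL⟩ := hcne
      exact (sInter_subset_of_mem hL).trans (hcS hL).2.1
    · intro b hb
      haveI : Nonempty c := hcne.to_subtype
      have key : (⋂ L : c, ((L : Set α) ∩ q ⁻¹' {b})).Nonempty := by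
        apply IsCompact.nonempty_iInter_of_directed_nonempty_isCompact_isClosed
        · intro L1 L2
          rcases hchain.total L1.2 L2.2 with h | h
          · exact ⟨L1, Subset.rfl, inter_subset_inter_left _ h⟩
          · exact ⟨L2, inter_subset_inter_left _ h, Subset.rfl⟩
        · intro L
          obtain ⟨a, haL, hab⟩ := (hcS L.2).2.2 hb
          exact ⟨a, haL, by simpa using hab⟩
        · intro L
          exact ((hcS L.2).1.inter ((isClosed_singleton.preimage hq))).isCompact
        · intro L
          exact (hcS L.2).1.inter (isClosed_singleton.preimage hq)
      obtain ⟨a, ha⟩ := key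
      refine ⟨a, ?_, ?_⟩
      · rw [mem_sInter]
        intro L hL
        exact (mem_iInter.mp ha ⟨L, hL⟩).1
      · simpa using (mem_iInter.mp ha ⟨hcne.choose, hcne.choose_spec⟩).2
  obtain ⟨m, hmx, hmS, hmin⟩ := zorn_superset_nonempty S H _ hx
  refine ⟨m, hmS.1, hmS.2.1, hmS.2.2, ?_⟩
  intro s hsm hscl hsT
  exact subset_antisymm hsm (hmin ⟨hscl, hsm.trans hmS.2.1, hsT⟩ hsm)



/-- A nonempty compact metric space embeds into a cube `[0,M]^ℕ` via distances
to a dense sequence. -/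
lemma exists_cube_embedding (K : Type*) [MetricSpace K] [CompactSpace K] [Nonempty K] :
    ∃ (M : ℝ) (e : K → ℕ → ℝ), 0 < M ∧ Continuous e ∧ Injective e ∧
      ∀ k n, e k n ∈ Icc (0:ℝ) M := by
  obtain ⟨r, hr⟩ := Metric.isBounded_iff_subset_closedBall
    (TopologicalSpace.denseSeq K 0) |>.mp (isCompact_univ.isBounded)
  set e : K → ℕ → ℝ := fun k n => dist k (TopologicalSpace.denseSeq K n) with he
  refine ⟨max (2*r) 1, e, lt_of_lt_of_le one_pos (le_max_right _ _), ?_, ?_, ?_⟩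
  · exact continuous_pi (fun n => Continuous.dist continuous_id continuous_const)
  · intro k k' hkk'
    have hd : ∀ n, dist k (TopologicalSpace.denseSeq K n)
        = dist k' (TopologicalSpace.denseSeq K n) := fun n => congrFun hkk' n
    have : ∀ ε > 0, dist k k' < 2 * ε := by
      intro ε hε
      obtain ⟨n, hn⟩ := Metric.denseRange_iff.mp (TopologicalSpace.denseRange_denseSeq K) k ε hε
      calc dist k k' ≤ dist k (TopologicalSpace.denseSeq K n)
            + dist (TopologicalSpace.denseSeq K n) k' := dist_triangle _ _ _
        _ = dist k (TopologicalSpace.denseSeq K n)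
            + dist k' (TopologicalSpace.denseSeq K n) := by rw [dist_comm (TopologicalSpace.denseSeq K n) k']
        _ = 2 * dist k (TopologicalSpace.denseSeq K n) := by rw [← hd n]; ring
        _ < 2 * ε := by linarith
    have hle : dist k k' ≤ 0 := by
      by_contra h
      push_neg at h
      have := this (dist k k' / 2) (by linarith)
      linarith
    exact dist_le_zero.mp hle
  · intro k n
    refine ⟨dist_nonneg, le_trans ?_ (le_max_left _ _)⟩
    have h1 : dist k (TopologicalSpace.denseSeq K 0) ≤ r := by
      simpa using hr (mem_univ k)
    have h2 : dist (TopologicalSpace.denseSeq K n) (TopologicalSpace.denseSeq K 0) ≤ r := by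
      simpa using hr (mem_univ (TopologicalSpace.denseSeq K n))
    calc dist k (TopologicalSpace.denseSeq K n)
        ≤ dist k (TopologicalSpace.denseSeq K 0)
          + dist (TopologicalSpace.denseSeq K 0) (TopologicalSpace.denseSeq K n) := dist_triangle _ _ _
      _ ≤ r + r := by rw [dist_comm (TopologicalSpace.denseSeq K 0)]; linarith
      _ = 2 * r := by ring

/-- In the countable-range situation, the Borel hull must be empty. -/
lemma B_eq_empty {X : Type*} [AddCommGroup X] (hX : Countable X)
    {B : Set X} {K : Type} [MetricSpace K] [CompactSpace K] [Nonempty K]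
    {f : K → X} (hmeag : ∀ x : X, IsMeagre (f ⁻¹' {y | y - x ∈ B})) : B = ∅ := by
  by_contra hB
  obtain ⟨b, hb⟩ := nonempty_iff_ne_empty.mpr hB
  have hfib : ∃ c : X, ¬ IsMeagre (f ⁻¹' {c}) := by
    by_contra h
    push_neg at h
    have hres : (⋂ c : X, (f ⁻¹' {c})ᶜ) ∈ residual K :=
      (countable_iInter_mem).mpr (fun c => h c)
    have hempty : (⋂ c : X, (f ⁻¹' {c})ᶜ) = ∅ := by
      ext k
      simp only [mem_iInter, mem_compl_iff, mem_preimage, mem_singleton_iff, mem_empty_iff_false,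
        iff_false, not_forall, not_not]
      exact ⟨f k, rfl⟩
    rw [hempty] at hres
    obtain ⟨k⟩ := ‹Nonempty K›
    exact absurd ((dense_of_mem_residual hres).nonempty) (by simp)
  obtain ⟨c, hc⟩ := hfib
  have : f ⁻¹' {c} ⊆ f ⁻¹' {y | y - (c - b) ∈ B} := by
    intro k hk
    simp only [mem_preimage, mem_singleton_iff] at hk
    simp only [mem_preimage, mem_setOf_eq, hk, sub_sub_cancel]
    exact hb
  exact hc ((hmeag (c - b)).mono this)


end HaarMeagerAux

open Set

/-- A set in an abelian Polish group is Haar meager iff the witness compact space can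
be taken to be a compact subset of the group itself. -/
theorem isHaarMeager_iff_compact_subset {X : Type*} [AddCommGroup X]
    [TopologicalSpace X] [IsTopologicalAddGroup X] [PolishSpace X]
    [MeasurableSpace X] [BorelSpace X] (A : Set X) :
    IsHaarMeager A ↔
      ∃ (K : Set X), IsCompact K ∧ K.Nonempty ∧
        ∃ g : K → X, Continuous g ∧
          ∃ B : Set X, A ⊆ B ∧ MeasurableSet B ∧
            ∀ x : X, IsMeagre (g ⁻¹' {y | y - x ∈ B}) := by
  constructor
  · rintro ⟨B, hAB, hBm, K, mK, cK, neK, f, hf, hmeag⟩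
    by_cases hX : Countable X
    · have hBe := HaarMeagerAux.B_eq_empty hX hmeag
      refine ⟨{0}, isCompact_singleton, singleton_nonempty 0, fun _ => 0, continuous_const,
        ∅, by rw [hBe] at hAB; exact hAB, MeasurableSet.empty, ?_⟩
      intro x
      have h : {y : X | y - x ∈ (∅ : Set X)} = ∅ := by simp
      rw [h, preimage_empty]
      exact IsMeagre.empty
    · obtain ⟨j, hjr, hjc, hjinj⟩ := isClosed_univ.exists_nat_bool_injection_of_not_countable
        (fun h => hX (countable_univ_iff.mp h))
      obtain ⟨M, e, hM, hec, heinj, hecube⟩ := HaarMeagerAux.exists_cube_embedding K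
      set K' : Set (ℕ → ℝ) := range e with hK'
      have hK'c : IsCompact K' := isCompact_range hec
      have hK'cl : IsClosed K' := hK'c.isClosed
      have hK'sub : K' ⊆ range (HaarMeagerAux.cantorToPi M) := by
        rintro _ ⟨k, rfl⟩
        exact HaarMeagerAux.cantorToPi_surj hM (fun n => hecube k n)
      obtain ⟨L, hLcl, hLsub, hLimg, hLmin⟩ := HaarMeagerAux.exists_minimal_closed
        (HaarMeagerAux.continuous_cantorToPi M) hK'cl hK'sub
      haveI : CompactSpace ↥L := isCompact_iff_compactSpace.mp hLcl.isCompact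
      have hLne : L.Nonempty := by
        obtain ⟨k⟩ := neK
        obtain ⟨a, haL, _⟩ := hLimg ⟨k, rfl⟩
        exact ⟨a, haL⟩
      haveI : Nonempty ↥L := hLne.to_subtype
      set jL : ↥L → X := fun a => j ↑a with hjL
      have hjLc : Continuous jL := hjc.comp continuous_subtype_val
      have hjLinj : Function.Injective jL := fun a b hab => Subtype.ext (hjinj hab)
      have hjLemb := hjLc.isClosedEmbedding hjLinj
      let hC : ↥L ≃ₜ ↥(range jL) := hjLemb.toIsEmbedding.toHomeomorph
      have heemb := hec.isClosedEmbedding heinj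
      let eK : K ≃ₜ ↥K' := heemb.toIsEmbedding.toHomeomorph
      set q' : ↥L → ↥K' := fun a => ⟨HaarMeagerAux.cantorToPi M ↑a, hLsub a.2⟩ with hq'
      have hq'c : Continuous q' := Continuous.subtype_mk
        ((HaarMeagerAux.continuous_cantorToPi M).comp continuous_subtype_val) _
      have hq'surj : Function.Surjective q' := by
        rintro ⟨y, hy⟩
        obtain ⟨a, haL, ha⟩ := hLimg hy
        exact ⟨⟨a, haL⟩, Subtype.ext ha⟩
      have hq'min : ∀ s : Set ↥L, IsClosed s → q' '' s = univ → s = univ := by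
        intro s hscl hsurjs
        have hE : (Subtype.val '' s : Set (ℕ → Bool)) = L := by
          apply hLmin
          · exact Subtype.coe_image_subset L s
          · exact (hscl.isCompact.image continuous_subtype_val).isClosed
          · intro y hy
            have hmem : (⟨y, hy⟩ : ↥K') ∈ q' '' s := hsurjs ▸ mem_univ _
            obtain ⟨a, has, ha⟩ := hmem
            exact ⟨↑a, ⟨a, has, rfl⟩, congrArg Subtype.val ha⟩
        ext a
        simp only [mem_univ, iff_true]
        have hmem : (↑a : ℕ → Bool) ∈ Subtype.val '' s := by rw [hE]; exact a.2
        obtain ⟨b, hbs, hba⟩ := hmem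
        rwa [show b = a from Subtype.ext hba] at hbs
      refine ⟨range jL, isCompact_range hjLc, range_nonempty jL,
        f ∘ eK.symm ∘ q' ∘ hC.symm,
        hf.comp (eK.symm.continuous.comp (hq'c.comp hC.symm.continuous)), B, hAB, hBm, ?_⟩
      intro x
      have hpre : (f ∘ eK.symm ∘ q' ∘ hC.symm) ⁻¹' {y | y - x ∈ B}
          = hC.symm ⁻¹' (q' ⁻¹' (eK.symm ⁻¹' (f ⁻¹' {y | y - x ∈ B}))) := rfl
      rw [hpre]
      have h1 : IsMeagre (f ⁻¹' {y | y - x ∈ B}) := hmeag x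
      have h2 := h1.preimage_of_isOpenMap eK.symm.continuous eK.symm.isOpenMap
      have h3 := HaarMeagerAux.isMeagre_preimage hq'c hq'surj hq'min h2
      exact h3.preimage_of_isOpenMap hC.symm.continuous hC.symm.isOpenMap
  · rintro ⟨K, hK, hKne, g, hg, B, hAB, hBm, hmeag⟩
    letI := TopologicalSpace.upgradeIsCompletelyMetrizable X
    letI : MetricSpace ↥K := Topology.IsEmbedding.subtypeVal.comapMetricSpace Subtype.val
    haveI : CompactSpace ↥K := isCompact_iff_compactSpace.mp hK
    haveI : Nonempty ↥K := hKne.to_subtype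
    obtain ⟨M, e, hM, hec, heinj, hecube⟩ := HaarMeagerAux.exists_cube_embedding ↥K
    have heemb := hec.isClosedEmbedding heinj
    let eH : ↥K ≃ₜ ↥(range e) := heemb.toIsEmbedding.toHomeomorph
    letI := TopologicalSpace.upgradeIsCompletelyMetrizable (ℕ → ℝ)
    letI : MetricSpace ↥(range e) := Topology.IsEmbedding.subtypeVal.comapMetricSpace Subtype.val
    haveI : CompactSpace ↥(range e) := isCompact_iff_compactSpace.mp (isCompact_range hec)
    haveI : Nonempty ↥(range e) := (range_nonempty e).to_subtype
    refine ⟨B, hAB, hBm, ↥(range e), inferInstance, inferInstance, inferInstance,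
      g ∘ eH.symm, hg.comp eH.symm.continuous, ?_⟩
    intro x
    exact (hmeag x).preimage_of_isOpenMap eH.symm.continuous eH.symm.isOpenMap
end

section
/- If X is a countable abelian Polish group, then the only Haar meager subset of X is the empty set. -/
open Set

/-- In a countable abelian Polish group the only Haar meager set is the empty set. -/
theorem isHaarMeager_eq_empty_of_countable {X : Type*} [AddCommGroup X]
    [TopologicalSpace X] [IsTopologicalAddGroup X] [PolishSpace X] [Countable X]
    [MeasurableSpace X] [BorelSpace X]
    (A : Set X) (hA : IsHaarMeager A) : A = ∅ := by
  by_contra h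
  obtain ⟨a, ha⟩ := Set.nonempty_iff_ne_empty.2 h
  obtain ⟨B, hAB, -, K, _, _, _, f, -, hf⟩ := hA
  have hB : a ∈ B := hAB ha
  -- The whole space K is covered by the countably many meager sets
  have hcov : (Set.univ : Set K) = ⋃ x : X, f ⁻¹' {y | y - x ∈ B} := by
    ext k
    simp only [Set.mem_univ, Set.mem_iUnion, Set.mem_preimage, Set.mem_setOf_eq, true_iff]
    exact ⟨f k - a, by simpa using hB⟩
  have hmeag : IsMeagre (Set.univ : Set K) := by
    rw [hcov]
    unfold IsMeagre
    rw [Set.compl_iUnion]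
    exact countable_iInter_mem.2 fun x => hf x
  have : Dense ((Set.univ : Set K)ᶜ) := dense_of_mem_residual hmeag
  simpa using this.nonempty
end

section
/- Let X be a Polish group that is not locally compact. Then X contains a closed nowhere dense set which is not Haar meager; in fact there is a closed set F ⊆ X such that F contains a translate of every compact subset of X and F is nowhere dense. -/
open Set Filter Topology Pointwise

/-! ### Auxiliary lemmas -/

/-- Preimages of Gδ sets under continuous maps are Gδ. -/
lemma myIsGδ_preimage {X Y : Type*} [TopologicalSpace X] [TopologicalSpace Y]
    {s : Set Y} (hs : IsGδ s) {f : X → Y} (hf : Continuous f) : IsGδ (f ⁻¹' s) := by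
  obtain ⟨T, hTo, hTc, rfl⟩ := hs
  rw [preimage_sInter]
  exact IsGδ.biInter hTc fun t ht => ((hTo t ht).preimage hf).isGδ

/-- A Polish subspace of a metric space, embedded with dense range, has Gδ range
(a special case of the Lavrentiev/Alexandrov theorem). -/
lemma myIsGδ_range_of_denseRange {X Y : Type*} [TopologicalSpace X] [PolishSpace X]
    [MetricSpace Y] {f : X → Y} (hf : IsEmbedding f) (hd : DenseRange f) :
    IsGδ (range f) := by
  letI := TopologicalSpace.upgradeIsCompletelyMetrizable X
  set S : ℕ → Set Y := fun n =>
    {y | ∃ O : Set Y, IsOpen O ∧ y ∈ O ∧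
      ∀ a ∈ f ⁻¹' O, ∀ b ∈ f ⁻¹' O, dist a b ≤ ((2:ℝ)⁻¹) ^ n} with hSdef
  have hSopen : ∀ n, IsOpen (S n) := by
    intro n
    rw [isOpen_iff_mem_nhds]
    rintro y ⟨O, hO, hyO, hdiam⟩
    exact mem_of_superset (hO.mem_nhds hyO) fun z hz => ⟨O, hO, hz, hdiam⟩
  have hsub : range f ⊆ ⋂ n, S n := by
    rintro _ ⟨g, rfl⟩
    refine mem_iInter.2 fun n => ?_
    have hball : IsOpen (Metric.ball g (((2:ℝ)⁻¹) ^ n / 2)) := Metric.isOpen_ball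
    obtain ⟨O, hO, hfO⟩ := hf.toIsInducing.isOpen_iff.1 hball
    refine ⟨O, hO, ?_, ?_⟩
    · rw [← mem_preimage, hfO]
      exact Metric.mem_ball_self (by positivity)
    · intro a ha b hb
      rw [hfO] at ha hb
      have ha' := Metric.mem_ball.1 ha
      have hb' := Metric.mem_ball.1 hb
      calc dist a b ≤ dist a g + dist g b := dist_triangle a g b
        _ = dist a g + dist b g := by rw [dist_comm g b]
        _ ≤ ((2:ℝ)⁻¹) ^ n / 2 + ((2:ℝ)⁻¹) ^ n / 2 := by
            exact add_le_add ha'.le hb'.le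
        _ = ((2:ℝ)⁻¹) ^ n := by ring
  have hsup : (⋂ n, S n) ⊆ range f := by
    intro y hy
    simp only [mem_iInter] at hy
    choose O hOopen hyO hOdiam using hy
    set P : ℕ → Set Y := fun n => (⋂ k ∈ Set.Iic n, O k) ∩ Metric.ball y (((2:ℝ)⁻¹) ^ n)
      with hPdef
    have hPopen : ∀ n, IsOpen (P n) :=
      fun n => (((Set.finite_Iic n).isOpen_biInter) fun k _ => hOopen k).inter Metric.isOpen_ball
    have hPy : ∀ n, y ∈ P n := fun n =>
      ⟨mem_biInter fun k _ => hyO k, Metric.mem_ball_self (by positivity)⟩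
    have hgn : ∀ n, ∃ a, f a ∈ P n := fun n => hd.exists_mem_open (hPopen n) ⟨y, hPy n⟩
    choose g hg using hgn
    have hPO : ∀ {k n : ℕ}, k ≤ n → P n ⊆ O k := fun {k n} hkn =>
      inter_subset_left.trans (biInter_subset_of_mem hkn)
    have hcauchy : CauchySeq g := by
      rw [Metric.cauchySeq_iff']
      intro ε hε
      obtain ⟨N, hN⟩ := exists_pow_lt_of_lt_one hε (by norm_num : (2:ℝ)⁻¹ < 1)
      refine ⟨N, fun n hn => ?_⟩
      have h1 : g n ∈ f ⁻¹' O N := mem_preimage.2 (hPO hn (hg n))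
      have h2 : g N ∈ f ⁻¹' O N := mem_preimage.2 (hPO le_rfl (hg N))
      exact lt_of_le_of_lt (hOdiam N _ h1 _ h2) hN
    obtain ⟨l, hl⟩ := cauchySeq_tendsto_of_complete hcauchy
    have h1 : Tendsto (fun n => f (g n)) atTop (𝓝 (f l)) :=
      ((hf.continuous.tendsto l).comp hl)
    have h2 : Tendsto (fun n => f (g n)) atTop (𝓝 y) := by
      rw [tendsto_iff_dist_tendsto_zero]
      have hpow : Tendsto (fun n : ℕ => ((2:ℝ)⁻¹) ^ n) atTop (𝓝 0) :=
        tendsto_pow_atTop_nhds_zero_of_lt_one (by norm_num) (by norm_num)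
      exact squeeze_zero (fun n => dist_nonneg)
        (fun n => (Metric.mem_ball.1 (hg n).2).le) hpow
    exact ⟨l, tendsto_nhds_unique h1 h2⟩
  have : range f = ⋂ n, S n := Subset.antisymm hsub hsup
  rw [this]
  exact IsGδ.iInter fun n => (hSopen n).isGδ

/-- An abelian group with a complete-able Polish topology which is a uniform group
for a metric uniformity is complete: the classical Baire-category argument inside
the completion. -/
lemma myCompleteSpace_of_metric_group {G : Type*} [AddCommGroup G] [MetricSpace G]
    [IsUniformAddGroup G] (hp : PolishSpace G) : CompleteSpace G := by
  haveI := hp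
  set Y := UniformSpace.Completion G with hYdef
  haveI : Nonempty Y := ⟨0⟩
  have hue : IsUniformEmbedding ((↑) : G → Y) :=
    UniformSpace.Completion.isUniformEmbedding_coe G
  have hdr : DenseRange ((↑) : G → Y) := UniformSpace.Completion.denseRange_coe
  have hGδ : IsGδ (range ((↑) : G → Y)) := myIsGδ_range_of_denseRange hue.isEmbedding hdr
  have hres : range ((↑) : G → Y) ∈ residual Y := residual_of_dense_Gδ hGδ hdr
  have hsurj : ∀ gc : Y, gc ∈ range ((↑) : G → Y) := by
    intro gc
    have hom : IsOpenMap (fun x : Y => gc + x) := by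
      exact (Homeomorph.addLeft gc).isOpenMap
    have h1 : IsGδ ((fun x : Y => gc + x) ⁻¹' (range ((↑) : G → Y))) :=
      myIsGδ_preimage hGδ (continuous_add_left gc)
    have h2 : Dense ((fun x : Y => gc + x) ⁻¹' (range ((↑) : G → Y))) :=
      Dense.preimage hdr hom
    have h3 := dense_of_mem_residual (Filter.inter_mem (residual_of_dense_Gδ h1 h2) hres)
    obtain ⟨z, hz1, hz2⟩ := h3.nonempty
    obtain ⟨a, rfl⟩ := hz2
    obtain ⟨b, hb⟩ := hz1
    refine ⟨b - a, ?_⟩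
    rw [UniformSpace.Completion.coe_sub, hb]
    exact add_sub_cancel_right gc _
  have huniv : range ((↑) : G → Y) = univ := eq_univ_iff_forall.2 hsurj
  refine (completeSpace_iff_isComplete_range hue.isUniformInducing).2 ?_
  rw [huniv]
  exact completeSpace_iff_isComplete_univ.1 inferInstance

/-- Raikov completeness of abelian Polish groups: the group uniformity is complete. -/
lemma myRaikov_complete {G : Type*} [AddCommGroup G] [TopologicalSpace G]
    [IsTopologicalAddGroup G] [PolishSpace G] :
    @CompleteSpace G (IsTopologicalAddGroup.rightUniformSpace G) := by
  haveI h1 : @IsUniformAddGroup G (IsTopologicalAddGroup.rightUniformSpace G) _ :=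
    isUniformAddGroup_of_addCommGroup
  haveI hng : (𝓝 (0:G)).IsCountablyGenerated := inferInstance
  haveI h2 : (@uniformity G (IsTopologicalAddGroup.rightUniformSpace G)).IsCountablyGenerated := by
    rw [uniformity_eq_comap_nhds_zero' G]
    exact Filter.comap.isCountablyGenerated _ _
  haveI ht2 : T2Space G := inferInstance
  letI m : MetricSpace G :=
    @UniformSpace.metricSpace G (IsTopologicalAddGroup.rightUniformSpace G) h2 (by exact inferInstance)
  haveI h3 : @IsUniformAddGroup G m.toUniformSpace _ := by exact h1
  have hp : @PolishSpace G m.toUniformSpace.toTopologicalSpace := by exact ‹PolishSpace G›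
  have := @myCompleteSpace_of_metric_group G _ m h3 hp
  exact this

/-- Group-Cauchy sequences in an abelian Polish group converge. -/
lemma myExists_tendsto_of_groupCauchy {G : Type*} [AddCommGroup G] [TopologicalSpace G]
    [IsTopologicalAddGroup G] [PolishSpace G] (t : ℕ → G)
    (ht : ∀ U ∈ 𝓝 (0:G), ∃ N : ℕ, ∀ p ≥ N, ∀ q ≥ N, t p - t q ∈ U) :
    ∃ x : G, Tendsto t atTop (𝓝 x) := by
  have hc : @CauchySeq G ℕ (IsTopologicalAddGroup.rightUniformSpace G) _ t := by
    refine (@cauchySeq_iff G (IsTopologicalAddGroup.rightUniformSpace G) t).2 ?_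
    intro V hV
    rw [uniformity_eq_comap_nhds_zero' G] at hV
    obtain ⟨W, hW, hWV⟩ := mem_comap.1 hV
    obtain ⟨N, hN⟩ := ht W (by exact hW)
    refine ⟨N, fun k hk l hl => hWV ?_⟩
    show t l + -t k ∈ W
    rw [← sub_eq_add_neg]
    exact hN l hl k hk
  obtain ⟨x, hx⟩ := @cauchySeq_tendsto_of_complete G ℕ
    (IsTopologicalAddGroup.rightUniformSpace G) _ (myRaikov_complete) t hc
  exact ⟨x, by exact hx⟩

/-- In a non-locally-compact Polish abelian group, no neighborhood of `0` can be covered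
by finitely many translates of a suitable smaller neighborhood. -/
lemma myExists_noncoverable {G : Type*} [AddCommGroup G] [TopologicalSpace G]
    [IsTopologicalAddGroup G] [PolishSpace G] (hlc : ¬ LocallyCompactSpace G)
    {U : Set G} (hU : U ∈ 𝓝 (0:G)) :
    ∃ V ∈ 𝓝 (0:G), ∀ T : Set G, T.Finite → ¬ U ⊆ ⋃ y ∈ T, y +ᵥ V := by
  by_contra hcon
  push_neg at hcon
  apply hlc
  have htb : @TotallyBounded G (IsTopologicalAddGroup.rightUniformSpace G) U := by
    refine (@totallyBounded_iff_subset_finite_iUnion_nhds_zero G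
      (IsTopologicalAddGroup.rightUniformSpace G) _ isUniformAddGroup_of_addCommGroup U).2 ?_
    intro V hV
    obtain ⟨T, hT1, hT2⟩ := hcon V (by exact hV)
    exact ⟨T, hT1, by exact hT2⟩
  have hcl : IsCompact (closure U) := by
    refine (@isCompact_iff_totallyBounded_isComplete G
      (IsTopologicalAddGroup.rightUniformSpace G) (closure U)).2 ⟨?_, ?_⟩
    · exact (by exact @TotallyBounded.closure G (IsTopologicalAddGroup.rightUniformSpace G) U htb)
    · exact @IsClosed.isComplete G (IsTopologicalAddGroup.rightUniformSpace G)
        myRaikov_complete _ (by exact isClosed_closure)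
  exact hcl.locallyCompactSpace_of_mem_nhds_of_addGroup (mem_of_superset hU subset_closure)

/-- A well-behaved decreasing sequence of symmetric open neighborhoods of `0`. -/
lemma myExists_good_basis {X : Type*} [AddCommGroup X] [TopologicalSpace X]
    [IsTopologicalAddGroup X] [(𝓝 (0:X)).IsCountablyGenerated] :
    ∃ W : ℕ → Set X, (∀ n, IsOpen (W n)) ∧ (∀ n, W n ∈ 𝓝 (0:X)) ∧
      (∀ n, ∀ x ∈ W n, -x ∈ W n) ∧ (∀ n, W (n+1) + W (n+1) ⊆ W n) ∧
      (∀ U ∈ 𝓝 (0:X), ∃ n, W n ⊆ U) ∧ (∀ a b : ℕ, a ≤ b → W b ⊆ W a) := by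
  obtain ⟨B, hB⟩ := (𝓝 (0:X)).exists_antitone_basis
  have hstep : ∀ U : Set X, U ∈ 𝓝 (0:X) →
      ∃ V : Set X, (IsOpen V ∧ V ∈ 𝓝 (0:X) ∧ ∀ x ∈ V, -x ∈ V) ∧ V + V ⊆ U := by
    intro U hU
    obtain ⟨V0, hV0, hadd⟩ := exists_nhds_zero_half hU
    refine ⟨interior V0 ∩ (fun x : X => -x) ⁻¹' interior V0,
      ⟨isOpen_interior.inter (isOpen_interior.preimage continuous_neg), ?_, ?_⟩, ?_⟩
    · refine Filter.inter_mem (interior_mem_nhds.2 hV0) ?_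
      refine (continuous_neg.continuousAt (x := (0:X))).preimage_mem_nhds ?_
      rw [neg_zero]
      exact interior_mem_nhds.2 hV0
    · rintro x ⟨hx1, hx2⟩
      exact ⟨hx2, by simpa using hx1⟩
    · rw [add_subset_iff]
      rintro a ⟨ha, -⟩ b ⟨hb, -⟩
      exact hadd a (interior_subset ha) b (interior_subset hb)
  choose g hg using hstep
  let Wrec : ℕ → {V : Set X // V ∈ 𝓝 (0:X)} := fun n =>
    Nat.rec ⟨g (B 0) (hB.mem 0), (hg (B 0) (hB.mem 0)).1.2.1⟩
      (fun k p => ⟨g (p.1 ∩ B (k+1)) (inter_mem p.2 (hB.mem (k+1))),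
        (hg _ (inter_mem p.2 (hB.mem (k+1)))).1.2.1⟩) n
  set W : ℕ → Set X := fun n => (Wrec n).1 with hWdef
  have hWmem : ∀ n, W n ∈ 𝓝 (0:X) := fun n => (Wrec n).2
  have hW0 : W 0 = g (B 0) (hB.mem 0) := rfl
  have hWrec : ∀ n, W (n+1) = g (W n ∩ B (n+1)) (inter_mem (hWmem n) (hB.mem (n+1))) :=
    fun n => rfl
  have hWopen : ∀ n, IsOpen (W n) := by
    intro n
    cases n with
    | zero => exact (hg (B 0) (hB.mem 0)).1.1
    | succ k => rw [hWrec k]; exact (hg _ _).1.1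
  have hWsym : ∀ n, ∀ x ∈ W n, -x ∈ W n := by
    intro n
    cases n with
    | zero => exact (hg (B 0) (hB.mem 0)).1.2.2
    | succ k => rw [hWrec k]; exact (hg _ _).1.2.2
  have hWadd : ∀ n, W (n+1) + W (n+1) ⊆ W n := by
    intro n
    rw [hWrec n]
    exact ((hg _ _).2).trans inter_subset_left
  have hWinB : ∀ n, W (n+1) ⊆ W n ∩ B (n+1) := by
    intro n
    intro z hz
    have h0 : (0:X) ∈ W (n+1) := mem_of_mem_nhds (hWmem (n+1))
    have : z + 0 ∈ W (n+1) + W (n+1) := Set.add_mem_add hz h0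
    rw [add_zero] at this
    rw [hWrec n] at this
    exact (hg _ _).2 this
  have hanti : ∀ a b : ℕ, a ≤ b → W b ⊆ W a := by
    have : ∀ n, W (n+1) ≤ W n := fun n => (hWinB n).trans inter_subset_left
    intro a b hab
    exact antitone_nat_of_succ_le this hab
  refine ⟨W, hWopen, hWmem, hWsym, hWadd, ?_, hanti⟩
  intro U hU
  obtain ⟨i, -, hi⟩ := hB.toHasBasis.mem_iff.1 hU
  refine ⟨i + 1, ?_⟩
  exact ((hWinB i).trans inter_subset_right).trans ((hB.antitone (Nat.le_succ i)).trans hi)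

/-- `closure S ⊆ S + V` for a symmetric open neighborhood `V` of `0`. -/
lemma myClosure_subset_add {X : Type*} [AddCommGroup X] [TopologicalSpace X]
    [IsTopologicalAddGroup X] {S V : Set X} (hV : IsOpen V) (h0 : (0:X) ∈ V)
    (hsym : ∀ x ∈ V, -x ∈ V) : closure S ⊆ S + V := by
  intro z hz
  have hzmem : z ∈ z +ᵥ V := by
    rw [mem_vadd_set]
    exact ⟨0, h0, by simp⟩
  have hnb : z +ᵥ V ∈ 𝓝 z := (hV.vadd z).mem_nhds hzmem
  obtain ⟨p, hpV, hpS⟩ := mem_closure_iff_nhds.1 hz _ hnb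
  obtain ⟨v, hv, hveq⟩ := mem_vadd_set.1 hpV
  have hzp : z = p + (-v) := by
    rw [← hveq, vadd_eq_add]
    abel
  rw [hzp]
  exact Set.add_mem_add hpS (hsym v hv)

/-- A non-locally-compact abelian Polish group contains a closed nowhere dense set that
contains a translate of every compact set, and in particular is not Haar meager. -/
theorem exists_closed_nowhereDense_not_isHaarMeager {X : Type*} [AddCommGroup X]
    [TopologicalSpace X] [IsTopologicalAddGroup X] [PolishSpace X]
    [MeasurableSpace X] [BorelSpace X] (hX : ¬ LocallyCompactSpace X) :
    ∃ F : Set X, IsClosed F ∧ IsNowhereDense F ∧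
      (∀ C : Set X, IsCompact C → ∃ t : X, (fun c => c + t) '' C ⊆ F) ∧
      ¬ IsHaarMeager F := by
  classical
  obtain ⟨W, hWopen, hWmem, hWsym, hWadd, hWcof, hWanti⟩ :=
    myExists_good_basis (X := X)
  have hW0mem : ∀ n, (0:X) ∈ W n := fun n => mem_of_mem_nhds (hWmem n)
  -- the non-coverability index function
  have hnc : ∀ a : ℕ, ∃ k : ℕ, a + 5 ≤ k ∧
      ∀ T : Set X, T.Finite → ¬ W a ⊆ ⋃ y ∈ T, y +ᵥ W k := by
    intro a
    obtain ⟨V, hV, hVnc⟩ := myExists_noncoverable hX (hWmem a)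
    obtain ⟨n, hn⟩ := hWcof V hV
    refine ⟨max n (a + 5), le_max_right _ _, fun T hT hsub => hVnc T hT ?_⟩
    refine hsub.trans ?_
    exact iUnion₂_mono fun y _ => vadd_set_mono ((hWanti n _ (le_max_left _ _)).trans hn)
  choose s hs5 hsnc using hnc
  -- the scale schedule
  let m : ℕ → ℕ := fun n => Nat.rec 2 (fun _ p => s p + 5) n
  have hmrec : ∀ n, m (n+1) = s (m n) + 5 := fun n => rfl
  have hm2 : ∀ n, 2 ≤ m n := by
    intro n
    cases n with
    | zero => exact le_refl 2
    | succ k => have := hmrec k; omega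
  have hmlb : ∀ n, n + 2 ≤ m n := by
    intro n
    induction n with
    | zero => exact le_refl 2
    | succ k ih =>
      have h1 := hmrec k
      have h2 := hs5 (m k)
      omega
  have hmono : Monotone m := by
    refine monotone_nat_of_le_succ fun n => ?_
    have h1 := hmrec n
    have h2 := hs5 (m n)
    omega
  -- the dense sequence and the open dense set
  have hx : DenseRange (TopologicalSpace.denseSeq X) := TopologicalSpace.denseRange_denseSeq X
  set x : ℕ → X := TopologicalSpace.denseSeq X with hxdef
  set Uset : Set X := ⋃ n, x n +ᵥ W (s (m n) + 6) with hUdef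
  have hUopen : IsOpen Uset := isOpen_iUnion fun n => (hWopen _).vadd _
  have hUdense : Dense Uset := by
    refine Dense.mono ?_ hx
    rintro _ ⟨n, rfl⟩
    refine mem_iUnion.2 ⟨n, ?_⟩
    rw [mem_vadd_set]
    exact ⟨0, hW0mem _, by simp⟩
  have hcatch : ∀ C : Set X, IsCompact C → ∃ t : X, ∀ c ∈ C, c + t ∉ Uset := by
    intro C hC
    -- the one-step avoidance
    have key : ∀ (n : ℕ) (tc : X), ∃ y ∈ W (m n), ∀ τ : X,
        τ - (tc + y) ∈ W (s (m n) + 3) →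
        ∀ c ∈ C, c + τ ∉ x n +ᵥ W (s (m n) + 6) := by
      intro n tc
      obtain ⟨T, hTC, hTcov⟩ := hC.elim_nhds_subcover (fun c => c +ᵥ W (s (m n) + 6))
        (fun c _ => ((hWopen _).vadd c).mem_nhds (by
          rw [mem_vadd_set]; exact ⟨0, hW0mem _, by simp⟩))
      by_contra hno
      push_neg at hno
      refine hsnc (m n) ((fun c => x n - c - tc) '' (T : Set X))
        (T.finite_toSet.image _) ?_
      intro y hy
      obtain ⟨τ, hτ, c, hcC, hcτ⟩ := hno y hy
      obtain ⟨g₀, hg₀, hgeq⟩ := mem_vadd_set.1 hcτ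
      obtain ⟨c₀, hc₀T, hcc₀⟩ := mem_iUnion₂.1 (hTcov hcC)
      obtain ⟨w₁, hw₁, hw₁eq⟩ := mem_vadd_set.1 hcc₀
      rw [vadd_eq_add] at hgeq hw₁eq
      refine mem_iUnion₂.2 ⟨x n - c₀ - tc, mem_image_of_mem _ hc₀T, ?_⟩
      rw [mem_vadd_set]
      refine ⟨g₀ + (-w₁) + (-(τ - (tc + y))), ?_, ?_⟩
      · -- membership in W (s (m n))
        have h1 : g₀ + (-w₁) ∈ W (s (m n) + 5) :=
          hWadd _ (Set.add_mem_add hg₀ (hWsym _ _ hw₁))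
        have h2 : -(τ - (tc + y)) ∈ W (s (m n) + 3) := hWsym _ _ hτ
        have h3 : g₀ + (-w₁) + (-(τ - (tc + y))) ∈ W (s (m n) + 2) := by
          refine hWadd (s (m n) + 2) ?_
          exact Set.add_mem_add (hWanti _ _ (by omega) h1) h2
        exact hWanti _ _ (by omega) h3
      · rw [vadd_eq_add]
        have hrel : g₀ = c + τ - x n := by rw [← hgeq]; abel
        rw [hrel, ← hw₁eq]
        abel
    choose Y hY1 hY2 using key
    -- the run
    let tseq : ℕ → X := fun n => Nat.rec 0 (fun k tk => tk + Y k tk) n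
    have htrec : ∀ n, tseq (n+1) = tseq n + Y n (tseq n) := fun n => rfl
    have hsum : ∀ (k N : ℕ), tseq (N + k) - tseq N ∈ W (m N - 1) := by
      intro k
      induction k with
      | zero =>
        intro N
        simpa using hW0mem (m N - 1)
      | succ k ih =>
        intro N
        have harg : N + (k+1) = (N+1) + k := by omega
        rw [harg]
        have h2 := ih (N+1)
        have h3 : tseq (N+1) - tseq N ∈ W (m N) := by
          rw [htrec N]
          simpa using hY1 N (tseq N)
        have hsplit : tseq ((N+1)+k) - tseq N =
            (tseq ((N+1)+k) - tseq (N+1)) + (tseq (N+1) - tseq N) := by abel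
        rw [hsplit]
        have hge : m N ≤ m (N+1) - 1 := by
          have ha := hmrec N
          have hb := hs5 (m N)
          omega
        have h2' : tseq ((N+1)+k) - tseq (N+1) ∈ W (m N) := hWanti _ _ hge h2
        have hws : W (m N) + W (m N) ⊆ W (m N - 1) := by
          have h := hWadd (m N - 1)
          rwa [Nat.sub_add_cancel (by have := hm2 N; omega)] at h
        exact hws (Set.add_mem_add h2' h3)
    have hcauchy : ∀ U ∈ 𝓝 (0:X), ∃ N : ℕ, ∀ p ≥ N, ∀ q ≥ N, tseq p - tseq q ∈ U := by
      intro U hU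
      obtain ⟨n₀, hn₀⟩ := hWcof U hU
      refine ⟨n₀, fun p hp q hq => ?_⟩
      rcases le_total q p with h | h
      · have := hsum (p - q) q
        rw [Nat.add_sub_cancel' h] at this
        refine hn₀ (hWanti n₀ _ ?_ this)
        have := hmlb q; omega
      · have h1 := hsum (q - p) p
        rw [Nat.add_sub_cancel' h] at h1
        have h2 : tseq p - tseq q = -(tseq q - tseq p) := by abel
        rw [h2]
        refine hn₀ (hWanti n₀ _ ?_ (hWsym _ _ h1))
        have := hmlb p; omega
    obtain ⟨tinf, htinf⟩ := myExists_tendsto_of_groupCauchy tseq hcauchy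
    refine ⟨tinf, ?_⟩
    intro c hcC hmem
    obtain ⟨n, hn⟩ := mem_iUnion.1 hmem
    -- show `tinf - tseq (n+1) ∈ W (s (m n) + 3)`
    have hφ : Tendsto (fun k => tseq ((n+1) + k) - tseq (n+1)) atTop
        (𝓝 (tinf - tseq (n+1))) := by
      have hshift : Tendsto (fun k => (n+1) + k) atTop atTop := by
        have heq : (fun k => (n+1) + k) = (fun k => k + (n+1)) := by
          funext k; omega
        rw [heq]
        exact tendsto_add_atTop_nat (n+1)
      exact (htinf.comp hshift).sub_const (tseq (n+1))
    have hmemc : tinf - tseq (n+1) ∈ closure (W (m (n+1) - 1)) :=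
      mem_closure_of_tendsto hφ (Eventually.of_forall fun k => hsum k (n+1))
    have hidx : m (n+1) - 1 = s (m n) + 4 := by
      have := hmrec n; omega
    rw [hidx] at hmemc
    have hcl : closure (W (s (m n) + 4)) ⊆ W (s (m n) + 3) := by
      have h1 : closure (W (s (m n) + 4)) ⊆ W (s (m n) + 4) + W (s (m n) + 4) :=
        myClosure_subset_add (hWopen (s (m n) + 4)) (hW0mem (s (m n) + 4))
          (hWsym (s (m n) + 4))
      exact h1.trans (hWadd (s (m n) + 3))
    have hcond : tinf - (tseq n + Y n (tseq n)) ∈ W (s (m n) + 3) := by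
      rw [← htrec n]
      exact hcl hmemc
    exact hY2 n (tseq n) tinf hcond c hcC hn
  refine ⟨Usetᶜ, hUopen.isClosed_compl, ?_, ?_, ?_⟩
  · -- nowhere dense
    refine (hUopen.isClosed_compl.isNowhereDense_iff).2 ?_
    rw [interior_compl, hUdense.closure_eq, compl_univ]
  · -- contains a translate of every compact set
    intro C hC
    obtain ⟨t, ht⟩ := hcatch C hC
    refine ⟨t, ?_⟩
    rintro _ ⟨c, hc, rfl⟩
    exact ht c hc
  · -- not Haar meager
    rintro ⟨B, hFB, -, K, instK, instKc, instKne, f, hfc, hmeager⟩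
    have hC : IsCompact (range f) := isCompact_range hfc
    obtain ⟨t, htsub⟩ := hcatch (range f) hC
    have hx' := hmeager (-t)
    have huniv : f ⁻¹' {y | y - (-t) ∈ B} = univ := by
      refine eq_univ_iff_forall.2 fun k => ?_
      show f k - (-t) ∈ B
      rw [sub_neg_eq_add]
      exact hFB (htsub (f k) (mem_range_self k))
    rw [huniv] at hx'
    have hK : Dense (∅ : Set K) := by
      refine dense_of_mem_residual ?_
      simpa [IsMeagre] using hx'
    exact absurd hK.nonempty (by simp)
end

section
/- Let X be an abelian Polish group, A ⊆ X a Borel set, K a compact metric space, and f : K → X a continuous function such that f⁻¹(A + x) is meager in K for all x ∈ X. Then for every y ∈ K, the set −f(y) + A is meager in X, hence A is meager. -/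
open Set

open Topology Filter TopologicalSpace

section KU

variable {α β : Type*} [TopologicalSpace α] [TopologicalSpace β]

/-- In a Baire space, a nonempty open set is not meager. -/
lemma aux_not_isMeagre_of_isOpen [BaireSpace α] {s : Set α} (hs : IsOpen s)
    (hne : s.Nonempty) : ¬ IsMeagre s := by
  intro h
  have hd : Dense sᶜ := dense_of_mem_residual h
  rcases hd.inter_open_nonempty s hs hne with ⟨x, hx1, hx2⟩
  exact hx2 hx1

/-- Sections of an open dense subset of a product are dense, for a residual set of
first coordinates (one half of the Kuratowski–Ulam machinery). -/
lemma aux_residual_dense_sections [SecondCountableTopology β] {U : Set (α × β)}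
    (hUo : IsOpen U) (hUd : Dense U) :
    {x : α | Dense {y : β | (x, y) ∈ U}} ∈ residual α := by
  set B : Set (Set β) := countableBasis β with hB
  have hbasis : IsTopologicalBasis B := isBasis_countableBasis β
  have hcount : B.Countable := countable_countableBasis β
  -- for each basic open V, the set of x whose section meets V
  have key : ∀ V ∈ B, V.Nonempty →
      (IsOpen {x : α | ∃ y ∈ V, (x, y) ∈ U} ∧ Dense {x : α | ∃ y ∈ V, (x, y) ∈ U}) := by
    intro V hV hVne
    have hVo : IsOpen V := isOpen_of_mem_countableBasis hV
    constructor
    · have : {x : α | ∃ y ∈ V, (x, y) ∈ U} = Prod.fst '' (U ∩ univ ×ˢ V) := by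
        ext x
        simp only [mem_setOf_eq, mem_image, mem_inter_iff, mem_prod, mem_univ, true_and]
        constructor
        · rintro ⟨y, hyV, hyU⟩; exact ⟨(x, y), ⟨hyU, hyV⟩, rfl⟩
        · rintro ⟨⟨a, b⟩, ⟨h1, h2⟩, rfl⟩; exact ⟨b, h2, h1⟩
      rw [this]
      exact isOpenMap_fst _ (hUo.inter (isOpen_univ.prod hVo))
    · rw [dense_iff_inter_open]
      intro W hWo hWne
      rcases hUd.inter_open_nonempty (W ×ˢ V) (hWo.prod hVo)
        (hWne.prod hVne) with ⟨p, hpWV, hpU⟩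
      exact ⟨p.1, hpWV.1, ⟨p.2, hpWV.2, hpU⟩⟩
  -- intersect over all nonempty basic sets
  have hmem : (⋂ V ∈ {V ∈ B | V.Nonempty}, {x : α | ∃ y ∈ V, (x, y) ∈ U}) ∈ residual α := by
    refine (countable_bInter_mem (hcount.mono (sep_subset _ _))).2 ?_
    rintro V ⟨hVB, hVne⟩
    exact residual_of_dense_open (key V hVB hVne).1 (key V hVB hVne).2
  refine mem_of_superset hmem ?_
  intro x hx
  simp only [mem_iInter, mem_setOf_eq] at hx
  simp only [mem_setOf_eq]
  rw [hbasis.dense_iff]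
  intro o ho hone
  rcases hbasis.exists_nonempty_subset hone (isOpen_of_mem_countableBasis ho)
    with ⟨V, hVB, hVne, hVo⟩
  rcases hx V ⟨hVB, hVne⟩ with ⟨y, hyV, hyU⟩
  exact ⟨y, hVo hyV, hyU⟩

/-- Sections of a meager subset of a product are meager, for a residual set of
first coordinates (the Kuratowski–Ulam theorem, one direction). -/
lemma aux_residual_meagre_sections [SecondCountableTopology β] {M : Set (α × β)}
    (hM : IsMeagre M) : {x : α | IsMeagre {y : β | (x, y) ∈ M}} ∈ residual α := by
  rcases isMeagre_iff_countable_union_isNowhereDense.1 hM with ⟨S, hSnwd, hScount, hSsub⟩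
  have hres : ∀ t ∈ S,
      {x : α | Dense {y : β | (x, y) ∈ (closure t : Set (α × β))ᶜ}} ∈ residual α := by
    intro t ht
    have hnwd : IsNowhereDense (closure t) := (hSnwd t ht).closure
    have hdo : Dense ((closure t : Set (α × β))ᶜ) := by
      rw [← interior_eq_empty_iff_dense_compl, ← closure_closure (s := t)]
      exact hnwd
    exact aux_residual_dense_sections isClosed_closure.isOpen_compl hdo
  have hmem := (countable_bInter_mem hScount).2 hres
  refine mem_of_superset hmem ?_
  intro x hx
  simp only [mem_iInter, mem_setOf_eq] at hx ⊢
  rw [isMeagre_iff_countable_union_isNowhereDense]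
  refine ⟨(fun t => {y : β | (x, y) ∈ (closure t : Set (α × β))}) '' S, ?_, hScount.image _, ?_⟩
  · rintro _ ⟨t, ht, rfl⟩
    have hclosed : IsClosed {y : β | (x, y) ∈ (closure t : Set (α × β))} :=
      isClosed_closure.preimage (Continuous.prodMk_right x)
    rw [hclosed.isNowhereDense_iff, interior_eq_empty_iff_dense_compl]
    exact hx t ht
  · intro y hy
    rcases hSsub hy with ⟨t, ht, hyt⟩
    exact ⟨_, ⟨t, ht, rfl⟩, subset_closure hyt⟩

/-- If all vertical sections of a Baire measurable set are meager, the set is meager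
(Kuratowski–Ulam, the other direction). -/
lemma aux_isMeagre_of_sections [SecondCountableTopology β] [BaireSpace α] [BaireSpace β]
    {E : Set (α × β)} (hE : BaireMeasurableSet E)
    (h : ∀ x : α, IsMeagre {y : β | (x, y) ∈ E}) : IsMeagre E := by
  rcases hE.residualEq_isOpen with ⟨U, hUo, hEU⟩
  set M : Set (α × β) := {p : α × β | (p ∈ E) = (p ∈ U)}ᶜ with hMdef
  have hMmeagre : IsMeagre M := by
    rw [IsMeagre, hMdef, compl_compl]
    exact hEU
  have hUempty : U = ∅ := by
    by_contra hne
    rcases nonempty_iff_ne_empty.2 hne with ⟨⟨x0, y0⟩, hp⟩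
    rcases isOpen_prod_iff.1 hUo x0 y0 hp with ⟨W, V, hWo, hVo, hxW, hyV, hWV⟩
    have hres := aux_residual_meagre_sections hMmeagre
    have hdense : Dense {x : α | IsMeagre {y : β | (x, y) ∈ M}} := dense_of_mem_residual hres
    rcases hdense.inter_open_nonempty W hWo ⟨x0, hxW⟩ with ⟨x, hxW', hxR⟩
    simp only [mem_setOf_eq] at hxR
    have hVsub : V ⊆ {y : β | (x, y) ∈ E} ∪ {y : β | (x, y) ∈ M} := by
      intro y hyV'
      by_cases hm : (x, y) ∈ M
      · exact Or.inr hm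
      · left
        have : ((x, y) ∈ E) = ((x, y) ∈ U) := not_not.1 hm
        rw [mem_setOf_eq, this]
        exact hWV ⟨hxW', hyV'⟩
    have hUnion : IsMeagre ({y : β | (x, y) ∈ E} ∪ {y : β | (x, y) ∈ M}) := by
      rw [IsMeagre, compl_union]
      exact Filter.inter_mem (h x) hxR
    have hVmeagre : IsMeagre V := hUnion.mono hVsub
    exact aux_not_isMeagre_of_isOpen hVo ⟨y0, hyV⟩ hVmeagre
  -- now E ⊆ M
  refine hMmeagre.mono ?_
  intro p hpE
  simp only [hMdef, mem_compl_iff, mem_setOf_eq, not_not]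
  intro hEq
  have : p ∈ U := hEq ▸ hpE
  rw [hUempty] at this
  exact this.elim

end KU

/-- If `A` is Borel in an abelian Polish group `X`, `K` a nonempty compact metric space
and `f : K → X` continuous with `f ⁻¹ (A + x)` meager for all `x`, then `-f y + A` is
meager for every `y ∈ K`, and hence `A` is meager. -/
theorem meager_translate_of_witness {X : Type*} [AddCommGroup X] [TopologicalSpace X]
    [IsTopologicalAddGroup X] [PolishSpace X] [MeasurableSpace X] [BorelSpace X]
    (A : Set X) (hBorel : MeasurableSet A)
    (K : Type*) [MetricSpace K] [CompactSpace K] [Nonempty K]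
    (f : K → X) (hf : Continuous f)
    (hw : ∀ x : X, IsMeagre (f ⁻¹' {y | y - x ∈ A})) :
    (∀ y : K, IsMeagre ((fun a => -f y + a) '' A)) ∧ IsMeagre A := by
  have hBaireX : BaireSpace X := by
    letI := upgradeIsCompletelyMetrizable X
    infer_instance
  -- the Borel set in the product
  set E : Set (X × K) := (fun p : X × K => f p.2 - p.1) ⁻¹' A with hEdef
  have hEmeas : BaireMeasurableSet E := by
    borelize (X × K)
    exact (hBorel.preimage ((hf.comp continuous_snd).sub continuous_fst).measurable
      ).baireMeasurableSet
  have hEsec : ∀ x : X, IsMeagre {z : K | (x, z) ∈ E} := fun x => hw x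
  have hEmeagre : IsMeagre E := aux_isMeagre_of_sections hEmeas hEsec
  -- swap coordinates
  have hE'meagre : IsMeagre (Prod.swap ⁻¹' E : Set (K × X)) :=
    hEmeagre.preimage_of_isOpenMap (Homeomorph.prodComm K X).continuous
      (Homeomorph.prodComm K X).isOpenMap
  have hres := aux_residual_meagre_sections hE'meagre
  have hdense : Dense {z : K | IsMeagre {x : X | (z, x) ∈ (Prod.swap ⁻¹' E : Set (K × X))}} :=
    dense_of_mem_residual hres
  rcases hdense.nonempty with ⟨z0, hz0⟩
  have hB : IsMeagre {x : X | f z0 - x ∈ A} := hz0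
  -- A is the preimage of this meager set under the homeomorphism x ↦ f z0 - x
  have hA : IsMeagre A := by
    have : A = (fun x : X => f z0 - x) ⁻¹' {x : X | f z0 - x ∈ A} := by
      ext a
      simp only [mem_preimage, mem_setOf_eq, sub_sub_cancel]
    rw [this]
    exact hB.preimage_of_isOpenMap (continuous_const.sub continuous_id)
      (isOpenMap_sub_left _)
  refine ⟨fun y => ?_, hA⟩
  have himg : (fun a : X => -f y + a) '' A = (fun a : X => f y + a) ⁻¹' A := by
    ext a
    simp only [mem_image, mem_preimage]
    constructor
    · rintro ⟨b, hb, rfl⟩; simpa using hb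
    · intro h; exact ⟨f y + a, h, by abel⟩
  rw [himg]
  exact hA.preimage_of_isOpenMap (continuous_const.add continuous_id) (isOpenMap_add_left _)
end
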